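/- arXiv:2205.02063 — 7 statements merged into one kernel-verified Lean document; each statement's English description precedes it below -/
import Mathlib

section
/- The integral identity (1/sqrt(2 pi D)) * ∫_0^T b * exp(-b^2/(2 D t (1 - t/T))) / ((1-t/T)^{1/2} t^{3/2}) dt = exp(-2 b^2/(T D)) holds for all b>0, T>0, D>0. -/
open MeasureTheory Set Filter
open scoped Topology

set_option maxHeartbeats 1000000

noncomputable def Efun (x : ℝ) : ℝ := ∫ s in (0:ℝ)..x, Real.exp (-s^2)

lemma Efun_cont : Continuous fun s : ℝ => Real.exp (-s^2) := by continuity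

lemma Efun_hasDerivAt (x : ℝ) : HasDerivAt Efun (Real.exp (-x^2)) x :=
  (Efun_cont.integral_hasStrictDerivAt 0 x).hasDerivAt

lemma Fderiv (k T t : ℝ) (ht0 : 0 < t) (htT : t < T) :
    HasDerivAt (fun u => Real.exp (-(4*k^2)) * Efun (k*(T-2*u)/Real.sqrt (u*(T-u)))
        + Efun (k*T/Real.sqrt (u*(T-u))))
      (-(Real.exp (-(k*T/Real.sqrt (t*(T-t)))^2) * (k * T / (t * Real.sqrt (t*(T-t)))))) t := by
  have hTt : 0 < T - t := by linarith
  have hs : 0 < t*(T-t) := mul_pos ht0 hTt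
  have hq : 0 < Real.sqrt (t*(T-t)) := Real.sqrt_pos.2 hs
  have hss : (Real.sqrt (t*(T-t)))^2 = t*(T-t) := Real.sq_sqrt hs.le
  set q : ℝ := Real.sqrt (t*(T-t)) with hqdef
  have hs' : HasDerivAt (fun u : ℝ => u*(T-u)) (T - 2*t) t := by
    have := (hasDerivAt_id t).mul ((hasDerivAt_const t T).sub (hasDerivAt_id t))
    simp only [id_eq] at this
    exact this.congr_deriv (by simp only [Pi.sub_apply, id_eq]; ring)
  have hsqrt : HasDerivAt (fun u : ℝ => Real.sqrt (u*(T-u))) ((T-2*t)/(2*q)) t := by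
    have := (Real.hasDerivAt_sqrt hs.ne').comp t hs'
    exact this.congr_deriv (by ring)
  have hnum : HasDerivAt (fun u : ℝ => k*(T-2*u)) (-(2*k)) t := by
    have := ((hasDerivAt_const t T).sub ((hasDerivAt_const t (2:ℝ)).mul
      (hasDerivAt_id t))).const_mul k
    simp only [id_eq] at this
    exact this.congr_deriv (by ring)
  have hA' : HasDerivAt (fun u => k*(T-2*u)/Real.sqrt (u*(T-u)))
      ((-(2*k) * q - k*(T-2*t) * ((T-2*t)/(2*q))) / q^2) t := hnum.div hsqrt hq.ne'
  have hB' : HasDerivAt (fun u => k*T/Real.sqrt (u*(T-u)))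
      ((0 * q - k*T * ((T-2*t)/(2*q))) / q^2) t :=
    (hasDerivAt_const t (k*T)).div hsqrt hq.ne'
  have hA2 : HasDerivAt (fun u => k*(T-2*u)/Real.sqrt (u*(T-u)))
      (-(k*T^2) / (2*q^2*q)) t := by
    have hrel2 : (T-2*t)^2 = T^2 - 4*q^2 := by rw [hss]; ring
    convert hA' using 1
    rw [show k*(T-2*t) * ((T-2*t)/(2*q)) = k*(T-2*t)^2/(2*q) by ring, hrel2]
    field_simp
    ring
  have hB2 : HasDerivAt (fun u => k*T/Real.sqrt (u*(T-u)))
      (-(k*T*(T-2*t)) / (2*q^2*q)) t := by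
    convert hB' using 1
    rw [div_eq_div_iff (by positivity) (by positivity)]
    field_simp
    ring
  have hrel2 : (T-2*t)^2 = T^2 - 4*q^2 := by rw [hss]; ring
  have hFA0 := (Efun_hasDerivAt (k*(T-2*t)/Real.sqrt (t*(T-t)))).comp t hA2
  have hFB0 := (Efun_hasDerivAt (k*T/Real.sqrt (t*(T-t)))).comp t hB2
  have hsum := (hFA0.const_mul (Real.exp (-(4*k^2)))).add hFB0
  simp only [Function.comp] at hsum
  have hexp : Real.exp (-(4*k^2)) * Real.exp (-(k*(T-2*t)/Real.sqrt (t*(T-t)))^2)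
      = Real.exp (-(k*T/Real.sqrt (t*(T-t)))^2) := by
    rw [← Real.exp_add]
    congr 1
    rw [← hqdef, div_pow, div_pow, mul_pow, mul_pow, hrel2]
    field_simp
    ring
  have hsumval : Real.exp (-(4*k^2)) *
        (Real.exp (-(k*(T-2*t)/Real.sqrt (t*(T-t)))^2) * (-(k*T^2) / (2*q^2*q)))
      + Real.exp (-(k*T/Real.sqrt (t*(T-t)))^2) * (-(k*T*(T-2*t)) / (2*q^2*q))
      = -(Real.exp (-(k*T/Real.sqrt (t*(T-t)))^2) * (k * T / (t * Real.sqrt (t*(T-t))))) := by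
    rw [← mul_assoc, hexp, ← hqdef]
    rw [← mul_add]
    rw [show -(k*T^2) / (2*q^2*q) + -(k*T*(T-2*t)) / (2*q^2*q)
        = -(k*T/(t*q)) by rw [hss]; field_simp; ring]
    ring
  rw [← hsumval]
  exact hsum

lemma Efun_atTop : Tendsto Efun atTop (𝓝 (Real.sqrt Real.pi / 2)) := by
  have hi : IntegrableOn (fun s : ℝ => Real.exp (-s^2)) (Set.Ioi 0) := by
    have := (integrable_exp_neg_mul_sq (one_pos)).integrableOn (s := Set.Ioi (0:ℝ))
    simpa using this
  have h := intervalIntegral_tendsto_integral_Ioi (μ := volume) 0 hi tendsto_id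
  have hval : ∫ x in Set.Ioi (0:ℝ), Real.exp (-x^2) = Real.sqrt Real.pi / 2 := by
    have := integral_gaussian_Ioi 1
    simpa using this
  rw [hval] at h
  exact h

lemma Efun_neg (x : ℝ) : Efun (-x) = - Efun x := by
  have h : (∫ s in (0:ℝ)..x, Real.exp (-(-s)^2)) = ∫ s in (-x)..(-(0:ℝ)), Real.exp (-s^2) :=
    intervalIntegral.integral_comp_neg (fun s => Real.exp (-s^2))
  simp only [neg_sq, neg_zero] at h
  unfold Efun
  rw [intervalIntegral.integral_symm, h]

lemma Efun_atBot : Tendsto Efun atBot (𝓝 (-(Real.sqrt Real.pi / 2))) := by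
  have h : Tendsto (fun x : ℝ => - Efun (-x)) atBot (𝓝 (-(Real.sqrt Real.pi / 2))) :=
    ((Efun_atTop.comp tendsto_neg_atBot_atTop)).neg
  refine h.congr fun x => ?_
  rw [Efun_neg, neg_neg]

lemma exp_neg_le (x : ℝ) (hx : 0 < x) : Real.exp (-x) ≤ 4/x^2 := by
  have h1 : 1 + x/2 ≤ Real.exp (x/2) := by
    have := Real.add_one_le_exp (x/2); linarith
  have h2 : Real.exp (x/2) * Real.exp (x/2) = Real.exp x := by
    rw [← Real.exp_add]; ring_nf
  have key : x^2 ≤ 4 * Real.exp x := by nlinarith [Real.exp_pos (x/2)]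
  rw [Real.exp_neg, inv_eq_one_div, div_le_div_iff₀ (Real.exp_pos x) (by positivity)]
  linarith

lemma gbound (k T t : ℝ) (hk : 0 < k) (hT : 0 < T) (ht0 : 0 < t) (htT : t < T) :
    Real.exp (-(k*T/Real.sqrt (t*(T-t)))^2) * (k * T / (t * Real.sqrt (t*(T-t))))
      ≤ 4/(k^3*T) := by
  have hTt : 0 < T - t := by linarith
  have hs : 0 < t*(T-t) := mul_pos ht0 hTt
  have hq : 0 < Real.sqrt (t*(T-t)) := Real.sqrt_pos.2 hs
  have hss : (Real.sqrt (t*(T-t)))^2 = t*(T-t) := Real.sq_sqrt hs.le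
  set q : ℝ := Real.sqrt (t*(T-t)) with hqdef
  have hqT : q ≤ T := by
    rw [hqdef]
    calc Real.sqrt (t*(T-t)) ≤ Real.sqrt (T^2) := by
          apply Real.sqrt_le_sqrt; nlinarith
      _ = T := Real.sqrt_sq hT.le
  have hBsq : (k*T/q)^2 = k^2*T^2/(t*(T-t)) := by
    rw [div_pow, hss, mul_pow]
  have hx : (0:ℝ) < k^2*T^2/(t*(T-t)) := by positivity
  have hb1 : Real.exp (-((k*T/q)^2)) ≤ 4*(t*(T-t))^2/(k^2*T^2)^2 := by
    rw [hBsq]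
    calc Real.exp (-(k^2*T^2/(t*(T-t)))) ≤ 4/(k^2*T^2/(t*(T-t)))^2 := exp_neg_le _ hx
      _ = 4*(t*(T-t))^2/(k^2*T^2)^2 := by
          rw [div_pow]; field_simp
  have step1 : Real.exp (-((k*T/q)^2)) * (k*T/(t*q)) ≤
      (4*(t*(T-t))^2/(k^2*T^2)^2) * (k*T/(t*q)) :=
    mul_le_mul_of_nonneg_right hb1 (by positivity)
  refine step1.trans ?_
  have heq : (4*(t*(T-t))^2/(k^2*T^2)^2) * (k*T/(t*q)) = 4*(T-t)*q/(k^3*T^3) := by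
    rw [← hss]
    field_simp
    linear_combination hss
  rw [heq]
  rw [div_le_div_iff₀ (by positivity) (by positivity)]
  have hprod : (T-t)*q ≤ T*T := mul_le_mul (by linarith) hqT hq.le hT.le
  nlinarith [hprod, mul_pos (pow_pos hk 3) hT]

lemma integrand_eq (D T b t : ℝ) (hD : 0 < D) (hT : 0 < T) (hb : 0 < b)
    (ht0 : 0 < t) (htT : t < T) :
    b * Real.exp (-b ^ 2 / (2 * D * t * (1 - t / T))) /
        ((1 - t / T) ^ ((1 : ℝ) / 2) * t ^ ((3 : ℝ) / 2)) =
    (-Real.sqrt (2*D)) *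
      (-(Real.exp (-((b/Real.sqrt (2*D*T))*T/Real.sqrt (t*(T-t)))^2) *
        ((b/Real.sqrt (2*D*T)) * T / (t * Real.sqrt (t*(T-t)))))) := by
  have h2DT : (0:ℝ) < 2*D*T := by positivity
  set k : ℝ := b / Real.sqrt (2*D*T) with hk
  have hk2 : k^2 = b^2 / (2*D*T) := by
    rw [hk, div_pow, Real.sq_sqrt h2DT.le]
  have hkpos : 0 < k := div_pos hb (Real.sqrt_pos.2 h2DT)
  have hTt : 0 < T - t := by linarith
  have hs : 0 < t*(T-t) := mul_pos ht0 hTt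
  have hq : 0 < Real.sqrt (t*(T-t)) := Real.sqrt_pos.2 hs
  have hss : (Real.sqrt (t*(T-t)))^2 = t*(T-t) := Real.sq_sqrt hs.le
  have h1t : (0:ℝ) < 1 - t/T := by
    rw [sub_pos, div_lt_one hT]; exact htT
  have hrp1 : (1 - t/T) ^ ((1:ℝ)/2) = Real.sqrt (1 - t/T) :=
    (Real.sqrt_eq_rpow _).symm
  have hrp2 : t ^ ((3:ℝ)/2) = t * Real.sqrt t := by
    rw [show (3:ℝ)/2 = 1 + 1/2 by norm_num, Real.rpow_add ht0, Real.rpow_one,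
      Real.sqrt_eq_rpow]
  have hden : Real.sqrt (1 - t/T) * (t * Real.sqrt t)
      = t * Real.sqrt (t*(T-t)) / Real.sqrt T := by
    rw [show Real.sqrt (1 - t/T) * (t * Real.sqrt t)
        = t * (Real.sqrt (1 - t/T) * Real.sqrt t) by ring,
      ← Real.sqrt_mul h1t.le,
      show (1 - t/T) * t = (t*(T-t))/T by field_simp,
      Real.sqrt_div hs.le]
    ring
  have hexparg : -b ^ 2 / (2 * D * t * (1 - t / T)) = -((k*T/Real.sqrt (t*(T-t)))^2) := by
    rw [div_pow, hss, mul_pow, hk2]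
    field_simp
  rw [hrp1, hrp2, hden, hexparg]
  have hsqrt2DT : Real.sqrt (2*D*T) = Real.sqrt (2*D) * Real.sqrt T :=
    Real.sqrt_mul (by positivity) T
  have hsT : 0 < Real.sqrt T := Real.sqrt_pos.2 hT
  have hs2D : 0 < Real.sqrt (2*D) := Real.sqrt_pos.2 (by positivity)
  have hkey : Real.sqrt (2*D) * (b / Real.sqrt (2*D*T) * T) = b * Real.sqrt T := by
    rw [hsqrt2DT]
    field_simp
    linear_combination (-1) * Real.sq_sqrt hT.le
  rw [neg_mul_neg, hk]
  rw [div_div_eq_mul_div]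
  rw [show Real.sqrt (2*D) * (Real.exp (-(b / Real.sqrt (2*D*T) * T / Real.sqrt (t*(T-t)))^2) *
        (b / Real.sqrt (2*D*T) * T / (t * Real.sqrt (t*(T-t)))))
      = Real.exp (-(b / Real.sqrt (2*D*T) * T / Real.sqrt (t*(T-t)))^2) *
        (Real.sqrt (2*D) * (b / Real.sqrt (2*D*T) * T)) / (t * Real.sqrt (t*(T-t))) by ring]
  rw [hkey]
  ring


theorem bridge_density_integral (D T b : ℝ) (hD : 0 < D) (hT : 0 < T) (hb : 0 < b) :
    (1 / Real.sqrt (2 * Real.pi * D)) *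
      ∫ t in Set.Ioo (0 : ℝ) T,
        b * Real.exp (-b ^ 2 / (2 * D * t * (1 - t / T))) /
          ((1 - t / T) ^ ((1 : ℝ) / 2) * t ^ ((3 : ℝ) / 2))
      = Real.exp (-(2 * b ^ 2) / (T * D)) := by
  have hπ := Real.pi_pos
  have h2DT : (0:ℝ) < 2*D*T := by positivity
  set k : ℝ := b / Real.sqrt (2*D*T) with hk
  have hkpos : 0 < k := div_pos hb (Real.sqrt_pos.2 h2DT)
  have hk2 : k^2 = b^2 / (2*D*T) := by
    rw [hk, div_pow, Real.sq_sqrt h2DT.le]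
  set F : ℝ → ℝ := fun u => Real.exp (-(4*k^2)) * Efun (k*(T-2*u)/Real.sqrt (u*(T-u)))
      + Efun (k*T/Real.sqrt (u*(T-u))) with hF
  set g : ℝ → ℝ := fun t =>
      -(Real.exp (-(k*T/Real.sqrt (t*(T-t)))^2) * (k * T / (t * Real.sqrt (t*(T-t))))) with hg
  have hderiv : ∀ t ∈ Set.Ioo (0:ℝ) T, HasDerivAt F (g t) t := by
    intro t ht
    exact Fderiv k T t ht.1 ht.2
  -- measurability of g
  have hm1 : Measurable fun t : ℝ => Real.sqrt (t*(T-t)) :=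
    (Real.continuous_sqrt.comp (continuous_id.mul (continuous_const.sub continuous_id))).measurable
  have hgmeas : AEStronglyMeasurable g volume := by
    refine Measurable.aestronglyMeasurable ?_
    refine Measurable.neg (Measurable.mul ?_ ?_)
    · exact Real.measurable_exp.comp (((measurable_const.div hm1).pow_const 2).neg)
    · exact measurable_const.div (measurable_id.mul hm1)
  have hgint : IntervalIntegrable g volume 0 T := by
    rw [intervalIntegrable_iff, Set.uIoc_of_le hT.le]
    apply Measure.integrableOn_of_bounded (M := 4/(k^3*T)) measure_Ioc_lt_top.ne hgmeas
    filter_upwards [ae_restrict_mem measurableSet_Ioc] with t ht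
    obtain ⟨ht0, htT⟩ := ht
    rcases eq_or_lt_of_le htT with h | htT'
    · have hz : g t = 0 := by
        rw [hg]; simp only
        rw [h]
        simp
      rw [hz, norm_zero]
      positivity
    · have hTt : 0 < T - t := by linarith
      have hq : 0 < Real.sqrt (t*(T-t)) := Real.sqrt_pos.2 (mul_pos ht0 hTt)
      have hnorm : ‖g t‖ = Real.exp (-(k*T/Real.sqrt (t*(T-t)))^2)
          * (k * T / (t * Real.sqrt (t*(T-t)))) := by
        rw [hg]; simp only
        rw [norm_neg, norm_mul, Real.norm_eq_abs, Real.norm_eq_abs,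
          abs_of_pos (Real.exp_pos _), abs_of_pos (by positivity)]
      rw [hnorm]
      exact gbound k T t hkpos hT ht0 htT'
  -- endpoint limits
  have hmem0 : Set.Ioo (0:ℝ) T ∈ 𝓝[>] (0:ℝ) := Ioo_mem_nhdsGT_of_mem ⟨le_refl 0, hT⟩
  have hmemT : Set.Ioo (0:ℝ) T ∈ 𝓝[<] T := Ioo_mem_nhdsLT_of_mem ⟨hT, le_refl T⟩
  have hqcont : Continuous fun t : ℝ => Real.sqrt (t*(T-t)) :=
    Real.continuous_sqrt.comp (continuous_id.mul (continuous_const.sub continuous_id))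
  have hq0 : Tendsto (fun t : ℝ => Real.sqrt (t*(T-t))) (𝓝[>] 0) (𝓝[>] 0) := by
    rw [tendsto_nhdsWithin_iff]
    constructor
    · exact (hqcont.tendsto' 0 0 (by simp)).mono_left nhdsWithin_le_nhds
    · filter_upwards [hmem0] with t ht
      exact Real.sqrt_pos.2 (mul_pos ht.1 (by linarith [ht.2]))
  have hqT : Tendsto (fun t : ℝ => Real.sqrt (t*(T-t))) (𝓝[<] T) (𝓝[>] 0) := by
    rw [tendsto_nhdsWithin_iff]
    constructor
    · exact (hqcont.tendsto' T 0 (by simp)).mono_left nhdsWithin_le_nhds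
    · filter_upwards [hmemT] with t ht
      exact Real.sqrt_pos.2 (mul_pos ht.1 (by linarith [ht.2]))
  have hinv0 : Tendsto (fun t : ℝ => (Real.sqrt (t*(T-t)))⁻¹) (𝓝[>] 0) atTop :=
    tendsto_inv_nhdsGT_zero.comp hq0
  have hinvT : Tendsto (fun t : ℝ => (Real.sqrt (t*(T-t)))⁻¹) (𝓝[<] T) atTop :=
    tendsto_inv_nhdsGT_zero.comp hqT
  have hA0 : Tendsto (fun u : ℝ => k*(T-2*u)/Real.sqrt (u*(T-u))) (𝓝[>] 0) atTop := by
    have hnumc : Continuous fun t : ℝ => k*(T-2*t) := continuous_const.mul (continuous_const.sub (continuous_const.mul continuous_id))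
    have hnum : Tendsto (fun t : ℝ => k*(T-2*t)) (𝓝[>] 0) (𝓝 (k*T)) :=
      (hnumc.tendsto' 0 (k*T) (by ring_nf)).mono_left nhdsWithin_le_nhds
    have := hnum.pos_mul_atTop (by positivity) hinv0
    exact this.congr fun t => (div_eq_mul_inv _ _).symm
  have hB0 : Tendsto (fun u : ℝ => k*T/Real.sqrt (u*(T-u))) (𝓝[>] 0) atTop := by
    have := (tendsto_const_nhds (x := k*T)).pos_mul_atTop (by positivity) hinv0
    exact this.congr fun t => (div_eq_mul_inv _ _).symm
  have hAT : Tendsto (fun u : ℝ => k*(T-2*u)/Real.sqrt (u*(T-u))) (𝓝[<] T) atBot := by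
    have hnumc : Continuous fun t : ℝ => k*(T-2*t) := continuous_const.mul (continuous_const.sub (continuous_const.mul continuous_id))
    have hnum : Tendsto (fun t : ℝ => k*(T-2*t)) (𝓝[<] T) (𝓝 (-(k*T))) :=
      (hnumc.tendsto' T (-(k*T)) (by ring)).mono_left nhdsWithin_le_nhds
    have hneg : -(k*T) < 0 := by
      have : 0 < k*T := by positivity
      linarith
    have := hnum.neg_mul_atTop hneg hinvT
    exact this.congr fun t => (div_eq_mul_inv _ _).symm
  have hBT : Tendsto (fun u : ℝ => k*T/Real.sqrt (u*(T-u))) (𝓝[<] T) atTop := by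
    have := (tendsto_const_nhds (x := k*T)).pos_mul_atTop (by positivity) hinvT
    exact this.congr fun t => (div_eq_mul_inv _ _).symm
  have hF0 : Tendsto F (𝓝[>] (0:ℝ))
      (𝓝 (Real.exp (-(4*k^2)) * (Real.sqrt Real.pi/2) + Real.sqrt Real.pi/2)) :=
    ((Efun_atTop.comp hA0).const_mul (Real.exp (-(4*k^2)))).add (Efun_atTop.comp hB0)
  have hFT : Tendsto F (𝓝[<] T)
      (𝓝 (Real.exp (-(4*k^2)) * (-(Real.sqrt Real.pi/2)) + Real.sqrt Real.pi/2)) :=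
    ((Efun_atBot.comp hAT).const_mul (Real.exp (-(4*k^2)))).add (Efun_atTop.comp hBT)
  have hFTC : ∫ t in (0:ℝ)..T, g t =
      (Real.exp (-(4*k^2)) * (-(Real.sqrt Real.pi/2)) + Real.sqrt Real.pi/2) -
      (Real.exp (-(4*k^2)) * (Real.sqrt Real.pi/2) + Real.sqrt Real.pi/2) :=
    intervalIntegral.integral_eq_sub_of_hasDerivAt_of_tendsto hT hderiv hgint hF0 hFT
  -- rewrite the integrand
  have hcongr : ∀ t ∈ Set.Ioo (0:ℝ) T,
      b * Real.exp (-b ^ 2 / (2 * D * t * (1 - t / T))) /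
        ((1 - t / T) ^ ((1 : ℝ) / 2) * t ^ ((3 : ℝ) / 2)) =
      (-Real.sqrt (2*D)) * g t := by
    intro t ht
    exact integrand_eq D T b t hD hT hb ht.1 ht.2
  -- put it together
  have hInt : ∫ t in Set.Ioo (0:ℝ) T,
      b * Real.exp (-b ^ 2 / (2 * D * t * (1 - t / T))) /
        ((1 - t / T) ^ ((1 : ℝ) / 2) * t ^ ((3 : ℝ) / 2))
      = Real.sqrt (2*D) * Real.sqrt Real.pi * Real.exp (-(4*k^2)) := by
    rw [setIntegral_congr_fun measurableSet_Ioo hcongr]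
    rw [integral_const_mul]
    rw [← integral_Ioc_eq_integral_Ioo, ← intervalIntegral.integral_of_le hT.le]
    rw [hFTC]
    ring
  rw [hInt]
  have hsqrt2piD : Real.sqrt (2*Real.pi*D) = Real.sqrt (2*D) * Real.sqrt Real.pi := by
    rw [← Real.sqrt_mul (by positivity)]
    ring_nf
  rw [hsqrt2piD]
  have hs2D : 0 < Real.sqrt (2*D) := Real.sqrt_pos.2 (by positivity)
  have hsπ : 0 < Real.sqrt Real.pi := Real.sqrt_pos.2 hπ
  rw [show (1 / (Real.sqrt (2*D) * Real.sqrt Real.pi)) *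
      (Real.sqrt (2*D) * Real.sqrt Real.pi * Real.exp (-(4*k^2)))
      = Real.exp (-(4*k^2)) by field_simp]
  congr 1
  rw [hk2]
  field_simp
  ring
end

section
/- For all b>0, T>0, D>0: (1/sqrt(2 pi D)) * ∫_0^T b * exp(-b^2/(2 D t (1 - t/T))) / (t^{1/2} (1-t/T)^{3/2}) dt = T * exp(-2 b^2/(T D)). -/
open MeasureTheory

private lemma bridge_aux_deriv (T : ℝ) (v : ℝ) :
    HasDerivAt (fun v : ℝ => T/2 * (1 - v / Real.sqrt (v^2+4)))
      (-(2*T) / (Real.sqrt (v^2+4))^3) v := by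
  have h1 : (0:ℝ) < v^2 + 4 := by positivity
  have hw0 : 0 < Real.sqrt (v^2+4) := Real.sqrt_pos.2 h1
  have hww : (Real.sqrt (v^2+4))^2 = v^2+4 := Real.sq_sqrt h1.le
  have hs : HasDerivAt (fun v : ℝ => Real.sqrt (v^2+4)) (2*v / (2 * Real.sqrt (v^2+4))) v := by
    have : HasDerivAt (fun v : ℝ => v^2+4) (2*v) v := by
      simpa using ((hasDerivAt_pow 2 v).add_const 4)
    exact this.sqrt (by positivity)
  have hd : HasDerivAt (fun v : ℝ => v / Real.sqrt (v^2+4))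
      ((1 * Real.sqrt (v^2+4) - v * (2*v / (2 * Real.sqrt (v^2+4)))) / (Real.sqrt (v^2+4))^2) v :=
    (hasDerivAt_id v).div hs hw0.ne'
  have := ((hd.const_sub 1).const_mul (T/2))
  refine this.congr_deriv ?_
  field_simp
  linear_combination (-T) * hww

private lemma bridge_aux_anti (T : ℝ) (hT : 0 < T) :
    StrictAnti (fun v : ℝ => T/2 * (1 - v / Real.sqrt (v^2+4))) := by
  refine strictAnti_of_deriv_neg fun v => ?_
  rw [(bridge_aux_deriv T v).deriv]
  have h1 : (0:ℝ) < v^2 + 4 := by positivity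
  have hw0 : 0 < Real.sqrt (v^2+4) := Real.sqrt_pos.2 h1
  exact div_neg_of_neg_of_pos (by linarith) (by positivity)

private lemma bridge_aux_image (T : ℝ) (hT : 0 < T) :
    (fun v : ℝ => T/2 * (1 - v / Real.sqrt (v^2+4))) '' Set.univ = Set.Ioo 0 T := by
  ext t
  simp only [Set.image_univ, Set.mem_range, Set.mem_Ioo]
  constructor
  · rintro ⟨v, rfl⟩
    have h1 : (0:ℝ) < v^2 + 4 := by positivity
    have hw0 : 0 < Real.sqrt (v^2+4) := Real.sqrt_pos.2 h1
    have hww : (Real.sqrt (v^2+4))^2 = v^2+4 := Real.sq_sqrt h1.le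
    have hvw : v < Real.sqrt (v^2+4) := by nlinarith
    have hvw' : -Real.sqrt (v^2+4) < v := by nlinarith
    have hlt : v / Real.sqrt (v^2+4) < 1 := (div_lt_one hw0).2 hvw
    have hgt : -1 < v / Real.sqrt (v^2+4) := by
      rw [lt_div_iff₀ hw0]; linarith
    constructor
    · have : 0 < 1 - v / Real.sqrt (v^2+4) := by linarith
      positivity
    · nlinarith
  · rintro ⟨ht0, htT⟩
    have hu1 : (0:ℝ) < t * (T - t) := mul_pos ht0 (by linarith)
    set u := Real.sqrt (t * (T - t)) with hu
    have hu0 : 0 < u := Real.sqrt_pos.2 hu1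
    have huu : u^2 = t * (T - t) := Real.sq_sqrt hu1.le
    refine ⟨(T - 2*t)/u, ?_⟩
    have h2 : ((T - 2*t)/u)^2 + 4 = (T/u)^2 := by
      field_simp
      linear_combination (4 : ℝ) * huu
    rw [h2, Real.sqrt_sq (by positivity)]
    field_simp
    ring

set_option maxHeartbeats 1000000 in
theorem bridge_density_integral' (D T b : ℝ) (hD : 0 < D) (hT : 0 < T) (hb : 0 < b) :
    (1 / Real.sqrt (2 * Real.pi * D)) *
      ∫ t in Set.Ioo (0 : ℝ) T,
        b * Real.exp (-b ^ 2 / (2 * D * t * (1 - t / T))) /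
          (t ^ ((1 : ℝ) / 2) * (1 - t / T) ^ ((3 : ℝ) / 2))
      = T * Real.exp (-(2 * b ^ 2) / (T * D)) := by
  have ha : (0:ℝ) < b^2/(2*D*T) := by positivity
  -- change of variables
  rw [← bridge_aux_image T hT,
    integral_image_eq_integral_abs_deriv_smul MeasurableSet.univ
      (fun x _ => (bridge_aux_deriv T x).hasDerivWithinAt)
      ((bridge_aux_anti T hT).injective.injOn), setIntegral_univ]
  -- pointwise simplification of the transformed integrand
  have hpw : ∀ v : ℝ,
      |(-(2*T) / (Real.sqrt (v^2+4))^3)| •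
        (b * Real.exp (-b ^ 2 /
            (2 * D * (T/2 * (1 - v / Real.sqrt (v^2+4))) *
              (1 - (T/2 * (1 - v / Real.sqrt (v^2+4))) / T))) /
          ((T/2 * (1 - v / Real.sqrt (v^2+4))) ^ ((1:ℝ)/2) *
            (1 - (T/2 * (1 - v / Real.sqrt (v^2+4))) / T) ^ ((3:ℝ)/2)))
      = (b * Real.sqrt T * Real.exp (-(2*b^2)/(T*D))) *
          (Real.exp (-(b^2/(2*D*T)) * v^2)
            - Real.exp (-(b^2/(2*D*T)) * v^2) * (v / Real.sqrt (v^2+4))) := by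
    intro v
    have h1 : (0:ℝ) < v^2 + 4 := by positivity
    set w := Real.sqrt (v^2+4) with hwdef
    have hw0 : 0 < w := Real.sqrt_pos.2 h1
    have hww : w^2 = v^2+4 := Real.sq_sqrt h1.le
    have hvw : v < w := by nlinarith
    have hvw' : -w < v := by nlinarith
    set t := T/2 * (1 - v / w) with htdef
    have hlt : v / w < 1 := (div_lt_one hw0).2 hvw
    have hgt : -1 < v / w := by rw [lt_div_iff₀ hw0]; linarith
    have ht0 : 0 < t := by
      have : 0 < 1 - v / w := by linarith
      positivity
    have h1t : 1 - t / T = (w + v) / (2*w) := by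
      rw [htdef]; field_simp; ring
    have h1t0 : 0 < 1 - t / T := by rw [h1t]; exact div_pos (by linarith) (by linarith)
    have hprod : t * (1 - t / T) = T / w^2 := by
      rw [h1t, htdef]
      field_simp
      linear_combination hww
    have hexp : Real.exp (-b ^ 2 / (2 * D * t * (1 - t / T)))
        = Real.exp (-(b^2/(2*D*T)) * v^2) * Real.exp (-(2*b^2)/(T*D)) := by
      rw [← Real.exp_add]
      congr 1
      rw [show 2 * D * t * (1 - t/T) = 2 * D * (t * (1 - t/T)) by ring, hprod]
      field_simp
      linear_combination (-1:ℝ) * hww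
    have hden : t ^ ((1:ℝ)/2) * (1 - t/T) ^ ((3:ℝ)/2)
        = ((w + v) / (2*w)) * (Real.sqrt T / w) := by
      rw [show ((3:ℝ)/2) = 1 + 1/2 by norm_num, Real.rpow_add h1t0, Real.rpow_one,
        ← Real.sqrt_eq_rpow, ← Real.sqrt_eq_rpow]
      rw [show Real.sqrt t * ((1 - t/T) * Real.sqrt (1 - t/T))
          = (1 - t/T) * (Real.sqrt t * Real.sqrt (1 - t/T)) by ring,
        ← Real.sqrt_mul ht0.le, hprod, Real.sqrt_div hT.le, Real.sqrt_sq hw0.le, h1t]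
    rw [hexp, hden, smul_eq_mul,
      abs_of_neg (div_neg_of_neg_of_pos (by linarith) (by positivity))]
    have hTs : Real.sqrt T * Real.sqrt T = T := Real.mul_self_sqrt hT.le
    have hsT0 : 0 < Real.sqrt T := Real.sqrt_pos.2 hT
    have hwv : 0 < w + v := by linarith
    have h4 : (w - v) * (w + v) = 4 := by nlinarith [hww]
    field_simp
    linear_combination
      (-((w - v) * (w + v))) * hTs + (-T) * h4
  rw [show (fun x : ℝ => |(-(2*T) / (Real.sqrt (x^2+4))^3)| •
        (b * Real.exp (-b ^ 2 /
            (2 * D * (T/2 * (1 - x / Real.sqrt (x^2+4))) *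
              (1 - (T/2 * (1 - x / Real.sqrt (x^2+4))) / T))) /
          ((T/2 * (1 - x / Real.sqrt (x^2+4))) ^ ((1:ℝ)/2) *
            (1 - (T/2 * (1 - x / Real.sqrt (x^2+4))) / T) ^ ((3:ℝ)/2))))
      = fun v : ℝ => (b * Real.sqrt T * Real.exp (-(2*b^2)/(T*D))) *
          (Real.exp (-(b^2/(2*D*T)) * v^2)
            - Real.exp (-(b^2/(2*D*T)) * v^2) * (v / Real.sqrt (v^2+4)))
    from funext hpw]
  rw [integral_const_mul]
  -- the odd part integrates to zero, the even part is Gaussian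
  have hg : Integrable (fun v : ℝ => Real.exp (-(b^2/(2*D*T)) * v^2)) :=
    integrable_exp_neg_mul_sq ha
  have hcont : Continuous (fun v : ℝ =>
      Real.exp (-(b^2/(2*D*T)) * v^2) * (v / Real.sqrt (v^2+4))) := by
    apply Continuous.mul
    · exact Real.continuous_exp.comp (continuous_const.mul (continuous_pow 2))
    · exact continuous_id.div
        (Real.continuous_sqrt.comp ((continuous_pow 2).add continuous_const))
        (fun v => (Real.sqrt_pos.2 (by positivity : (0:ℝ) < v^2+4)).ne')
  have hodd_int : Integrable (fun v : ℝ =>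
      Real.exp (-(b^2/(2*D*T)) * v^2) * (v / Real.sqrt (v^2+4))) := by
    refine hg.mono hcont.aestronglyMeasurable (ae_of_all _ fun v => ?_)
    have h1 : (0:ℝ) < v^2 + 4 := by positivity
    have hw0 : 0 < Real.sqrt (v^2+4) := Real.sqrt_pos.2 h1
    have hww : (Real.sqrt (v^2+4))^2 = v^2+4 := Real.sq_sqrt h1.le
    have hva : |v| ≤ Real.sqrt (v^2+4) := by
      rw [abs_le]; constructor <;> nlinarith
    rw [Real.norm_eq_abs, Real.norm_eq_abs, abs_mul,
      Real.abs_exp, abs_div, abs_of_pos hw0]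
    exact mul_le_of_le_one_right (Real.exp_pos _).le ((div_le_one hw0).2 hva)
  have hodd : (∫ v : ℝ, Real.exp (-(b^2/(2*D*T)) * v^2) * (v / Real.sqrt (v^2+4))) = 0 := by
    have h := integral_neg_eq_self
      (fun v : ℝ => Real.exp (-(b^2/(2*D*T)) * v^2) * (v / Real.sqrt (v^2+4))) volume
    have h2 : (fun x : ℝ => Real.exp (-(b^2/(2*D*T)) * (-x)^2) * ((-x) / Real.sqrt ((-x)^2+4)))
        = fun x : ℝ => -(Real.exp (-(b^2/(2*D*T)) * x^2) * (x / Real.sqrt (x^2+4))) := by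
      funext x; simp [neg_sq, neg_div]
    rw [h2] at h
    rw [integral_neg] at h
    linarith
  rw [integral_sub hg hodd_int, hodd, sub_zero, integral_gaussian]
  -- final algebra
  have hpi : (0:ℝ) < Real.pi := Real.pi_pos
  have hsq : Real.sqrt (Real.pi / (b^2/(2*D*T))) = Real.sqrt (2*Real.pi*D) * Real.sqrt T / b := by
    rw [show Real.pi / (b^2/(2*D*T)) = (2*Real.pi*D) * T / b^2 by field_simp,
      Real.sqrt_div' _ (by positivity), Real.sqrt_mul (by positivity), Real.sqrt_sq hb.le]
  rw [hsq]
  have h2pD : 0 < Real.sqrt (2*Real.pi*D) := Real.sqrt_pos.2 (by positivity)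
  have hTs : Real.sqrt T * Real.sqrt T = T := Real.mul_self_sqrt hT.le
  field_simp
  linear_combination hTs
end

section
/- For all b>0, T>0, D>0: ∫_0^T exp(-b^2/(2 D t (1 - t/T))) / (t (1 - t/T))^{3/2} dt = (2 sqrt(2 pi D) / b) * exp(-2 b^2/(T D)). -/
open MeasureTheory

theorem bridge_integral_threehalves (D T b : ℝ) (hD : 0 < D) (hT : 0 < T) (hb : 0 < b) :
    ∫ t in Set.Ioo (0 : ℝ) T,
        Real.exp (-b ^ 2 / (2 * D * t * (1 - t / T))) / (t * (1 - t / T)) ^ ((3 : ℝ) / 2)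
      = (2 * Real.sqrt (2 * Real.pi * D) / b) * Real.exp (-(2 * b ^ 2) / (T * D)) := by
  have hDT : (0:ℝ) < 2*D*T := by positivity
  obtain ⟨c, hc⟩ : ∃ c : ℝ, c = b / Real.sqrt (2*D*T) := ⟨_, rfl⟩
  have hsDT : 0 < Real.sqrt (2*D*T) := Real.sqrt_pos.2 hDT
  have hcpos : 0 < c := hc ▸ div_pos hb hsDT
  obtain ⟨f, hfdef⟩ : ∃ f : ℝ → ℝ, f = fun t => c * ((2*t - T) / Real.sqrt (t*(T-t))) := ⟨_, rfl⟩
  obtain ⟨f', hf'def⟩ : ∃ f' : ℝ → ℝ, f' = fun t => c * (T^2 / (2 * (t*(T-t)) * Real.sqrt (t*(T-t)))) := ⟨_, rfl⟩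
  obtain ⟨A, hA⟩ : ∃ A : ℝ, A = 2 * Real.sqrt (2*D) / b * Real.exp (-(2*b^2)/(T*D)) := ⟨_, rfl⟩
  have hp : ∀ t ∈ Set.Ioo (0:ℝ) T, 0 < t*(T-t) := fun t ht =>
    mul_pos ht.1 (by have := ht.2; linarith)
  -- derivative
  have hderiv : ∀ t ∈ Set.Ioo (0:ℝ) T, HasDerivAt f (f' t) t := by
    intro t ht
    have hpt := hp t ht
    have hst : 0 < Real.sqrt (t*(T-t)) := Real.sqrt_pos.2 hpt
    have h1 : HasDerivAt (fun t : ℝ => t*(T-t)) (T - 2*t) t := by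
      have h := (hasDerivAt_id t).mul ((hasDerivAt_const t T).sub (hasDerivAt_id t))
      exact h.congr_deriv (by simp only [Pi.sub_apply, id_eq]; ring)
    have h2 : HasDerivAt (fun t : ℝ => Real.sqrt (t*(T-t)))
        ((T - 2*t)/(2*Real.sqrt (t*(T-t)))) t := h1.sqrt hpt.ne'
    have h3 : HasDerivAt (fun t : ℝ => 2*t - T) 2 t := by
      simpa using ((hasDerivAt_id t).const_mul 2).sub_const T
    have h4 := (h3.div h2 hst.ne').const_mul c
    rw [hfdef]
    refine h4.congr_deriv ?_
    symm
    simp only [hf'def]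
    have hs2 : t*(T-t) = Real.sqrt (t*(T-t))^2 := (Real.sq_sqrt hpt.le).symm
    set s := Real.sqrt (t*(T-t)) with hsdef
    rw [hs2]
    field_simp
    ring_nf
    linear_combination 4*hs2
  have hcont : ContinuousOn f (Set.Ioo 0 T) := fun t ht =>
    (hderiv t ht).continuousAt.continuousWithinAt
  have hf'pos : ∀ t ∈ Set.Ioo (0:ℝ) T, 0 < f' t := by
    intro t ht
    have hpt := hp t ht
    have hst : 0 < Real.sqrt (t*(T-t)) := Real.sqrt_pos.2 hpt
    rw [hf'def]
    exact mul_pos hcpos (div_pos (pow_pos hT 2)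
      (mul_pos (mul_pos two_pos hpt) hst))
  have hmono : StrictMonoOn f (Set.Ioo 0 T) := by
    apply strictMonoOn_of_deriv_pos (convex_Ioo 0 T) hcont
    intro t ht
    rw [interior_Ioo] at ht
    rw [(hderiv t ht).deriv]
    exact hf'pos t ht
  -- surjectivity
  have hsurj : ∀ u : ℝ, ∃ t ∈ Set.Ioo (0:ℝ) T, f t = u := by
    intro u
    have hr2pos : (0:ℝ) < 4*c^2 + u^2 := by positivity
    set r := Real.sqrt (4*c^2 + u^2) with hr
    have hrpos : 0 < r := Real.sqrt_pos.2 hr2pos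
    have hr2 : r^2 = 4*c^2 + u^2 := Real.sq_sqrt hr2pos.le
    have hu1 : u/r < 1 := by
      rw [div_lt_one hrpos]
      nlinarith [abs_nonneg u, sq_abs u]
    have hu2 : -1 < u/r := by
      rw [neg_lt, ← neg_div, div_lt_one hrpos]
      nlinarith
    refine ⟨T/2 * (1 + u/r), ⟨by nlinarith, by nlinarith⟩, ?_⟩
    have hkey : (T/2 * (1 + u/r)) * (T - T/2 * (1 + u/r)) = (T*c/r)^2 := by
      field_simp
      linear_combination hr2
    simp only [hfdef]
    rw [hkey, Real.sqrt_sq (by positivity)]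
    field_simp
    ring
  have himg : f '' Set.Ioo 0 T = Set.univ :=
    Set.eq_univ_of_forall fun u => by
      obtain ⟨t, ht, hft⟩ := hsurj u; exact ⟨t, ht, hft⟩
  -- change of variables
  have hcov := integral_image_eq_integral_abs_deriv_smul measurableSet_Ioo
      (fun t ht => (hderiv t ht).hasDerivWithinAt) hmono.injOn
      (fun u => A * Real.exp (-u^2))
  rw [himg] at hcov
  -- pointwise identity
  have hpt_eq : ∀ t ∈ Set.Ioo (0:ℝ) T,
      Real.exp (-b ^ 2 / (2 * D * t * (1 - t / T))) / (t * (1 - t / T)) ^ ((3 : ℝ) / 2)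
        = |f' t| • (A * Real.exp (-(f t)^2)) := by
    intro t ht
    have hpt := hp t ht
    have hst : 0 < Real.sqrt (t*(T-t)) := Real.sqrt_pos.2 hpt
    have h0 : t ≠ 0 := ht.1.ne'
    have hT0 : T ≠ 0 := hT.ne'
    have hTt : T - t ≠ 0 := by have := ht.2; intro h; linarith
    have ht1 : t * (1 - t/T) = (t*(T-t))/T := by field_simp
    have hc2 : c^2 = b^2/(2*D*T) := by
      rw [hc, div_pow, Real.sq_sqrt hDT.le]
    have hsq : (f t)^2 = c^2*(2*t-T)^2/(t*(T-t)) := by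
      simp only [hfdef]
      rw [mul_pow, div_pow, Real.sq_sqrt hpt.le]
      ring
    have hexp : -(f t)^2 = -b ^ 2 / (2 * D * t * (1 - t / T)) + 2*b^2/(D*T) := by
      rw [hsq, hc2]
      field_simp
      ring
    have habs : |f' t| = f' t := abs_of_pos (hf'pos t ht)
    have hrpow : ((t*(T-t))/T) ^ ((3:ℝ)/2)
        = ((t*(T-t))/T) * (Real.sqrt (t*(T-t)) / Real.sqrt T) := by
      rw [show ((3:ℝ)/2) = 1 + 1/2 by norm_num, Real.rpow_add (by positivity), Real.rpow_one,
        ← Real.sqrt_eq_rpow, Real.sqrt_div hpt.le]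
    have hEE : (2 * Real.sqrt (2*D) / b * Real.exp (-(2*b^2)/(T*D))) *
        (Real.exp (-b ^ 2 / (2 * D * t * (1 - t / T))) * Real.exp (2*b^2/(D*T)))
        = 2 * Real.sqrt (2*D) / b * Real.exp (-b ^ 2 / (2 * D * t * (1 - t / T))) := by
      have h1 : Real.exp (-(2*b^2)/(T*D)) * Real.exp (2*b^2/(D*T)) = 1 := by
        rw [← Real.exp_add, show -(2*b^2)/(T*D) + 2*b^2/(D*T) = 0 by field_simp; ring, Real.exp_zero]
      calc (2 * Real.sqrt (2*D) / b * Real.exp (-(2*b^2)/(T*D))) *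
            (Real.exp (-b ^ 2 / (2 * D * t * (1 - t / T))) * Real.exp (2*b^2/(D*T)))
          = 2 * Real.sqrt (2*D) / b * Real.exp (-b ^ 2 / (2 * D * t * (1 - t / T))) *
            (Real.exp (-(2*b^2)/(T*D)) * Real.exp (2*b^2/(D*T))) := by ring
        _ = _ := by rw [h1, mul_one]
    rw [smul_eq_mul, habs, hexp, Real.exp_add, ht1, hrpow, hA]
    simp only [hf'def]
    rw [hEE, hc]
    obtain ⟨E, hE⟩ : ∃ E : ℝ, E = Real.exp (-b ^ 2 / (2 * D * t * (1 - t / T))) := ⟨_, rfl⟩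
    rw [← hE]
    -- final algebraic identity
    rw [show (2*D*T) = (2*D)*T by ring, Real.sqrt_mul (by positivity : (0:ℝ) ≤ 2*D) T]
    have hsT : 0 < Real.sqrt T := Real.sqrt_pos.2 hT
    have hsD : 0 < Real.sqrt (2*D) := Real.sqrt_pos.2 (by positivity)
    have hT2 : Real.sqrt T ^ 2 = T := Real.sq_sqrt hT.le
    set s := Real.sqrt (t*(T-t))
    set sT := Real.sqrt T
    set sD := Real.sqrt (2*D)
    have hpt' : t*(T-t) ≠ 0 := hpt.ne'
    rw [← hT2] at hpt' ⊢
    field_simp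
  rw [setIntegral_congr_fun measurableSet_Ioo hpt_eq, ← hcov, setIntegral_univ, integral_const_mul]
  have hgauss : ∫ x : ℝ, Real.exp (-x^2) = Real.sqrt Real.pi := by
    have h := integral_gaussian 1
    simpa using h
  rw [hgauss, hA]
  rw [show 2*Real.pi*D = (2*D)*Real.pi by ring, Real.sqrt_mul (by positivity : (0:ℝ) ≤ 2*D)]
  ring
end

section
/- Define G(a) = ∫_0^T exp(-a^2/(2 D t (1-t/T))) / sqrt(2 pi D t (1-t/T)) dt for a>0, with D,T>0 fixed. Then G(a) = (2/D) ∫_a^∞ exp(-2x^2/(T D)) dx. -/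
open MeasureTheory
open Real Set

lemma aux_ftc (b a : ℝ) (hb : 0 < b) :
    ∫ x in Set.Ioi a, x * Real.exp (-b * x ^ 2) = Real.exp (-b * a ^ 2) / (2 * b) := by
  have hderiv : ∀ x ∈ Set.Ici a, HasDerivAt (fun x : ℝ => -Real.exp (-b * x ^ 2) / (2 * b))
      (x * Real.exp (-b * x ^ 2)) x := by
    intro x _
    have h1 : HasDerivAt (fun x : ℝ => -b * x ^ 2) (-b * (2 * x)) x := by
      simpa using ((hasDerivAt_pow 2 x).const_mul (-b))
    have h2 := (h1.exp).neg.div_const (2 * b)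
    refine h2.congr_deriv (Eq.symm ?_)
    field_simp
  have hint : IntegrableOn (fun x => x * Real.exp (-b * x ^ 2)) (Set.Ioi a) :=
    (integrable_mul_exp_neg_mul_sq hb).integrableOn
  have htend : Filter.Tendsto (fun x : ℝ => -Real.exp (-b * x ^ 2) / (2 * b)) Filter.atTop (nhds 0) := by
    have h0 : Filter.Tendsto (fun x : ℝ => b * x ^ 2) Filter.atTop Filter.atTop :=
      (Filter.tendsto_pow_atTop (by norm_num)).const_mul_atTop hb
    have : Filter.Tendsto (fun x : ℝ => Real.exp (-(b * x ^ 2))) Filter.atTop (nhds 0) :=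
      tendsto_exp_neg_atTop_nhds_zero.comp h0
    simp only [neg_mul] at this ⊢
    simpa using (this.neg.div_const (2 * b))
  have := integral_Ioi_of_hasDerivAt_of_tendsto' hderiv hint htend
  rw [this]
  ring

lemma aux_star (c a : ℝ) (hc : 0 < c) (ha : 0 < a) :
    ∫ u in Set.Ioi (0:ℝ), Real.exp (-(c * a ^ 2 * (1 + u ^ 2))) / (1 + u ^ 2)
      = Real.sqrt (Real.pi * c) * ∫ x in Set.Ioi a, Real.exp (-c * x ^ 2) := by
  set f : ℝ → ℝ → ℝ := fun u x => 2 * c * x * Real.exp (-(c * (1 + u ^ 2)) * x ^ 2) with hf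
  have hb : ∀ u : ℝ, 0 < c * (1 + u ^ 2) := fun u => mul_pos hc (by positivity)
  have hinner : ∀ u : ℝ, ∫ x in Set.Ioi a, f u x
      = Real.exp (-(c * a ^ 2 * (1 + u ^ 2))) / (1 + u ^ 2) := by
    intro u
    have h1 : ∫ x in Set.Ioi a, x * Real.exp (-(c * (1 + u ^ 2)) * x ^ 2)
        = Real.exp (-(c * (1 + u ^ 2)) * a ^ 2) / (2 * (c * (1 + u ^ 2))) :=
      aux_ftc _ a (hb u)
    have : ∫ x in Set.Ioi a, f u x
        = (2 * c) * ∫ x in Set.Ioi a, x * Real.exp (-(c * (1 + u ^ 2)) * x ^ 2) := by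
      rw [← integral_const_mul]
      congr 1 with x
      ring
    rw [this, h1]
    have h2 : (0:ℝ) < 1 + u ^ 2 := by positivity
    rw [show -(c * (1 + u ^ 2)) * a ^ 2 = -(c * a ^ 2 * (1 + u ^ 2)) by ring]
    field_simp
  have hcont : Continuous (Function.uncurry f) := by
    apply Continuous.mul
    · fun_prop
    · apply Real.continuous_exp.comp
      fun_prop
  have hfnonneg : ∀ u : ℝ, ∀ x ∈ Set.Ioi a, 0 ≤ f u x := by
    intro u x hx
    have : (0:ℝ) < x := lt_trans ha hx
    positivity
  have hslice : ∀ u : ℝ, IntegrableOn (f u) (Set.Ioi a) := by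
    intro u
    have h2 := ((integrable_mul_exp_neg_mul_sq (hb u)).integrableOn
      (s := Set.Ioi a)).const_mul (2 * c)
    apply h2.congr
    filter_upwards with x
    simp only [hf]; ring
  have hnormint : ∀ u : ℝ, ∫ x in Set.Ioi a, ‖f u x‖
      = Real.exp (-(c * a ^ 2 * (1 + u ^ 2))) / (1 + u ^ 2) := by
    intro u
    rw [← hinner u]
    apply setIntegral_congr_fun measurableSet_Ioi
    intro x hx
    exact Real.norm_of_nonneg (hfnonneg u x hx)
  have hIntProd : Integrable (Function.uncurry f)
      ((volume.restrict (Set.Ioi (0:ℝ))).prod (volume.restrict (Set.Ioi a))) := by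
    rw [integrable_prod_iff hcont.aestronglyMeasurable]
    constructor
    · exact Filter.Eventually.of_forall fun u => hslice u
    · apply (MeasureTheory.Integrable.mono' (g := fun u : ℝ => (1 + u ^ 2)⁻¹)
        ((integrable_inv_one_add_sq).restrict))
      · exact ((hcont.norm.aestronglyMeasurable
          (μ := (volume.restrict (Set.Ioi (0:ℝ))).prod
            (volume.restrict (Set.Ioi a))))).integral_prod_right'
      · filter_upwards with u
        have h2 : (0:ℝ) < 1 + u ^ 2 := by positivity
        rw [Real.norm_of_nonneg (by
          exact setIntegral_nonneg measurableSet_Ioi fun x hx =>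
            norm_nonneg _)]
        show (∫ x in Set.Ioi a, ‖f u x‖) ≤ (1 + u ^ 2)⁻¹
        rw [hnormint u, div_le_iff₀ h2, inv_mul_cancel₀ h2.ne']
        exact Real.exp_le_one_iff.2 (neg_nonpos.2 (by positivity))
  calc
    ∫ u in Set.Ioi (0:ℝ), Real.exp (-(c * a ^ 2 * (1 + u ^ 2))) / (1 + u ^ 2)
        = ∫ u in Set.Ioi (0:ℝ), ∫ x in Set.Ioi a, f u x := by
          symm
          apply setIntegral_congr_fun measurableSet_Ioi
          intro u _
          exact hinner u
    _ = ∫ x in Set.Ioi a, ∫ u in Set.Ioi (0:ℝ), f u x := integral_integral_swap hIntProd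
    _ = ∫ x in Set.Ioi a, Real.sqrt (Real.pi * c) * Real.exp (-c * x ^ 2) := by
          apply setIntegral_congr_fun measurableSet_Ioi
          intro x hx
          have hx0 : 0 < x := lt_trans ha hx
          have hcx : 0 < c * x ^ 2 := by positivity
          have heq : ∀ u : ℝ, f u x
              = (2 * c * x * Real.exp (-c * x ^ 2)) * Real.exp (-(c * x ^ 2) * u ^ 2) := by
            intro u
            simp only [hf]
            rw [show (-(c * (1 + u ^ 2)) * x ^ 2) = (-c * x ^ 2) + (-(c * x ^ 2) * u ^ 2) by ring,
              Real.exp_add]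
            ring
          simp only [heq]
          rw [integral_const_mul, integral_gaussian_Ioi]
          have h1 : Real.sqrt (Real.pi / (c * x ^ 2))
              = Real.sqrt (Real.pi * c) / (c * x) := by
            rw [show Real.pi / (c * x ^ 2) = (Real.pi * c) / (c * x) ^ 2 by
              field_simp]
            rw [Real.sqrt_div (by positivity) , Real.sqrt_sq (by positivity)]
          rw [h1]
          field_simp
    _ = Real.sqrt (Real.pi * c) * ∫ x in Set.Ioi a, Real.exp (-c * x ^ 2) := by
          rw [integral_const_mul]

noncomputable def wfun (u : ℝ) : ℝ := u / Real.sqrt (1 + u ^ 2)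

lemma wfun_hasDerivAt (u : ℝ) :
    HasDerivAt wfun (((1 + u ^ 2) * Real.sqrt (1 + u ^ 2))⁻¹) u := by
  have h0 : (0:ℝ) < 1 + u ^ 2 := by positivity
  have hs : (0:ℝ) < Real.sqrt (1 + u ^ 2) := Real.sqrt_pos.2 h0
  have hinner : HasDerivAt (fun u : ℝ => 1 + u ^ 2) (2 * u) u := by
    simpa using ((hasDerivAt_pow 2 u).const_add 1)
  have hsqrt : HasDerivAt (fun u : ℝ => Real.sqrt (1 + u ^ 2))
      (1 / (2 * Real.sqrt (1 + u ^ 2)) * (2 * u)) u :=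
    (Real.hasDerivAt_sqrt h0.ne').comp u hinner
  have hdiv := (hasDerivAt_id u).div hsqrt hs.ne'
  have hsq : Real.sqrt (1 + u ^ 2) * Real.sqrt (1 + u ^ 2) = 1 + u ^ 2 :=
    Real.mul_self_sqrt h0.le
  refine hdiv.congr_deriv (Eq.symm ?_)
  rw [Real.sq_sqrt h0.le, id]
  have hnum : (1:ℝ) * Real.sqrt (1 + u ^ 2) - u * (1 / (2 * Real.sqrt (1 + u ^ 2)) * (2 * u))
      = (Real.sqrt (1 + u ^ 2) * Real.sqrt (1 + u ^ 2) - u ^ 2) / Real.sqrt (1 + u ^ 2) := by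
    field_simp
  rw [hnum, hsq, show (1:ℝ) + u ^ 2 - u ^ 2 = 1 by ring]
  rw [div_div, mul_inv, one_div, mul_comm (Real.sqrt (1 + u ^ 2)) (1 + u ^ 2), mul_inv]

lemma wfun_strictMono : StrictMono wfun := by
  apply strictMono_of_deriv_pos
  intro u
  rw [(wfun_hasDerivAt u).deriv]
  positivity

lemma wfun_mem (u : ℝ) (hu : 0 < u) : wfun u ∈ Set.Ioo (0:ℝ) 1 := by
  have h0 : (0:ℝ) < 1 + u ^ 2 := by positivity
  have hs : (0:ℝ) < Real.sqrt (1 + u ^ 2) := Real.sqrt_pos.2 h0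
  unfold wfun
  constructor
  · exact div_pos hu hs
  · rw [div_lt_one hs]
    calc u = Real.sqrt (u ^ 2) := by rw [Real.sqrt_sq hu.le]
    _ < Real.sqrt (1 + u ^ 2) := by
        apply Real.sqrt_lt_sqrt (by positivity)
        linarith

lemma wfun_surj (r : ℝ) (hr : r ∈ Set.Ioo (0:ℝ) 1) :
    ∃ u > 0, wfun u = r := by
  obtain ⟨hr0, hr1⟩ := hr
  have h1 : (0:ℝ) < 1 - r ^ 2 := by nlinarith
  refine ⟨r / Real.sqrt (1 - r ^ 2), by positivity, ?_⟩
  have hs : (0:ℝ) < Real.sqrt (1 - r ^ 2) := Real.sqrt_pos.2 h1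
  unfold wfun
  have h2 : 1 + (r / Real.sqrt (1 - r ^ 2)) ^ 2 = 1 / (1 - r ^ 2) := by
    rw [div_pow, Real.sq_sqrt h1.le]
    field_simp
    ring
  rw [h2, one_div, Real.sqrt_inv, div_inv_eq_mul]
  exact div_mul_cancel₀ _ hs.ne'

lemma half_sub1 (D T : ℝ) (hD : 0 < D) (hT : 0 < T) (a : ℝ) (ha : 0 < a) :
    (∀ u ∈ Set.Ioi (0:ℝ),
      |(-(T / 2) * ((1 + u ^ 2) * Real.sqrt (1 + u ^ 2))⁻¹)| •
        (Real.exp (-a ^ 2 / (2 * D * (T / 2 - T / 2 * wfun u) * (1 - (T / 2 - T / 2 * wfun u) / T))) /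
          Real.sqrt (2 * Real.pi * D * (T / 2 - T / 2 * wfun u) * (1 - (T / 2 - T / 2 * wfun u) / T)))
      = (T / 2) / Real.sqrt (Real.pi * D * T / 2) *
          (Real.exp (-(2 / (T * D) * a ^ 2 * (1 + u ^ 2))) / (1 + u ^ 2))) := by
  intro u _
  have h0 : (0:ℝ) < 1 + u ^ 2 := by positivity
  have hs : (0:ℝ) < Real.sqrt (1 + u ^ 2) := Real.sqrt_pos.2 h0
  have hsq : Real.sqrt (1 + u ^ 2) * Real.sqrt (1 + u ^ 2) = 1 + u ^ 2 :=
    Real.mul_self_sqrt h0.le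
  have hw2 : (wfun u) ^ 2 = u ^ 2 / (1 + u ^ 2) := by
    unfold wfun; rw [div_pow, Real.sq_sqrt h0.le]
  set t := T / 2 - T / 2 * wfun u with htdef
  have hprod : t * (1 - t / T) = T / 4 / (1 + u ^ 2) := by
    have h1 : t * (1 - t / T) = T / 4 * (1 - (wfun u) ^ 2) := by
      rw [htdef]; field_simp; ring
    rw [h1, hw2]
    field_simp
    ring
  have hexp : -a ^ 2 / (2 * D * t * (1 - t / T)) = -(2 / (T * D) * a ^ 2 * (1 + u ^ 2)) := by
    rw [mul_assoc (2 * D) t _, hprod]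
    field_simp
    ring
  have hsqrtarg : 2 * Real.pi * D * t * (1 - t / T) = (Real.pi * D * T / 2) / (1 + u ^ 2) := by
    rw [mul_assoc (2 * Real.pi * D) t _, hprod]
    field_simp
    ring
  rw [hexp, hsqrtarg, Real.sqrt_div (by positivity) _]
  have hS : (0:ℝ) < Real.sqrt (Real.pi * D * T / 2) := Real.sqrt_pos.2 (by positivity)
  rw [smul_eq_mul, abs_mul, abs_neg, abs_of_nonneg (by positivity : (0:ℝ) ≤ T / 2),
    abs_of_nonneg (by positivity : (0:ℝ) ≤ ((1 + u ^ 2) * Real.sqrt (1 + u ^ 2))⁻¹)]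
  field_simp

lemma phi_img (T : ℝ) (hT : 0 < T) :
    (fun u : ℝ => T / 2 - T / 2 * wfun u) '' Set.Ioi 0 = Set.Ioo 0 (T / 2) := by
  ext t
  constructor
  · rintro ⟨u, hu, rfl⟩
    obtain ⟨hw0, hw1⟩ := wfun_mem u hu
    constructor
    · nlinarith
    · nlinarith
  · rintro ⟨ht0, ht1⟩
    have hr : 1 - 2 * t / T ∈ Set.Ioo (0:ℝ) 1 := by
      constructor
      · rw [sub_pos, div_lt_one hT]; linarith
      · rw [sub_lt_self_iff]; positivity
    obtain ⟨u, hu, hwu⟩ := wfun_surj _ hr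
    refine ⟨u, hu, ?_⟩
    show T / 2 - T / 2 * wfun u = t
    rw [hwu]
    field_simp
    ring

lemma phi_deriv (T : ℝ) (u : ℝ) :
    HasDerivAt (fun u : ℝ => T / 2 - T / 2 * wfun u)
      (-(T / 2) * ((1 + u ^ 2) * Real.sqrt (1 + u ^ 2))⁻¹) u := by
  have := ((wfun_hasDerivAt u).const_mul (T / 2)).const_sub (T / 2)
  refine this.congr_deriv (Eq.symm ?_)
  ring

lemma phi_inj (T : ℝ) (hT : 0 < T) : Set.InjOn (fun u : ℝ => T / 2 - T / 2 * wfun u) (Set.Ioi 0) := by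
  intro x _ y _ h
  simp only at h
  have : wfun x = wfun y := by
    have hT2 : T ≠ 0 := hT.ne'
    field_simp at h
    linarith
  exact wfun_strictMono.injective this

lemma half_integral (D T : ℝ) (hD : 0 < D) (hT : 0 < T) (a : ℝ) (ha : 0 < a) :
    ∫ t in Set.Ioo (0:ℝ) (T / 2),
        Real.exp (-a ^ 2 / (2 * D * t * (1 - t / T))) /
          Real.sqrt (2 * Real.pi * D * t * (1 - t / T))
      = (T / 2) / Real.sqrt (Real.pi * D * T / 2) *
          ∫ u in Set.Ioi (0:ℝ), Real.exp (-(2 / (T * D) * a ^ 2 * (1 + u ^ 2))) / (1 + u ^ 2) := by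
  rw [← phi_img T hT,
    integral_image_eq_integral_abs_deriv_smul measurableSet_Ioi
      (fun u _ => (phi_deriv T u).hasDerivWithinAt) (phi_inj T hT)]
  rw [← integral_const_mul]
  exact setIntegral_congr_fun measurableSet_Ioi (half_sub1 D T hD hT a ha)

lemma half_integrable (D T : ℝ) (hD : 0 < D) (hT : 0 < T) (a : ℝ) (ha : 0 < a) :
    IntegrableOn (fun t => Real.exp (-a ^ 2 / (2 * D * t * (1 - t / T))) /
        Real.sqrt (2 * Real.pi * D * t * (1 - t / T))) (Set.Ioo (0:ℝ) (T / 2)) := by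
  rw [← phi_img T hT,
    integrableOn_image_iff_integrableOn_abs_deriv_smul measurableSet_Ioi
      (fun u _ => (phi_deriv T u).hasDerivWithinAt) (phi_inj T hT)]
  have hSpos : (0:ℝ) < Real.sqrt (Real.pi * D * T / 2) := Real.sqrt_pos.2 (by positivity)
  apply (MeasureTheory.Integrable.mono'
      (g := fun u : ℝ => (T / 2) / Real.sqrt (Real.pi * D * T / 2) * (1 + u ^ 2)⁻¹)
      ((integrable_inv_one_add_sq.const_mul _).restrict) ?meas ?bound)
  case meas =>
    apply ContinuousOn.aestronglyMeasurable ?_ measurableSet_Ioi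
    intro u hu
    have := half_sub1 D T hD hT a ha
    apply ContinuousWithinAt.congr (f := fun u => (T / 2) / Real.sqrt (Real.pi * D * T / 2) *
        (Real.exp (-(2 / (T * D) * a ^ 2 * (1 + u ^ 2))) / (1 + u ^ 2)))
    · apply ContinuousWithinAt.mul continuousWithinAt_const
      apply ContinuousWithinAt.div
      · exact (Real.continuous_exp.comp
          ((continuous_const.mul (continuous_const.add (continuous_pow 2))).neg)).continuousWithinAt
      · exact (continuous_const.add (continuous_pow 2)).continuousWithinAt
      · positivity
    · intro x hx
      exact half_sub1 D T hD hT a ha x hx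
    · exact half_sub1 D T hD hT a ha u hu
  case bound =>
    filter_upwards [ae_restrict_mem measurableSet_Ioi] with u hu
    rw [half_sub1 D T hD hT a ha u hu]
    have h0 : (0:ℝ) < 1 + u ^ 2 := by positivity
    have he : Real.exp (-(2 / (T * D) * a ^ 2 * (1 + u ^ 2))) ≤ 1 :=
      Real.exp_le_one_iff.2 (neg_nonpos.2 (by positivity))
    rw [Real.norm_of_nonneg (by positivity)]
    apply mul_le_mul_of_nonneg_left _ (by positivity)
    rw [div_eq_mul_inv]
    exact mul_le_of_le_one_left (by positivity) he

lemma refl_deriv (T : ℝ) (t : ℝ) : HasDerivAt (fun t : ℝ => T - t) (-1) t := by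
  simpa using (hasDerivAt_id t).const_sub T

lemma hsym (D T : ℝ) (hT : 0 < T) (t : ℝ) :
    2 * D * (T - t) * (1 - (T - t) / T) = 2 * D * t * (1 - t / T) := by
  field_simp
  ring

lemma refl_img (T : ℝ) : (fun t : ℝ => T - t) '' Set.Ioo 0 (T / 2) = Set.Ioo (T / 2) T := by
  rw [Set.image_const_sub_Ioo, sub_zero, sub_half]

lemma refl_pointwise (D T : ℝ) (hT : 0 < T) (a : ℝ) (t : ℝ) :
    |(-1 : ℝ)| • (Real.exp (-a ^ 2 / (2 * D * (T - t) * (1 - (T - t) / T))) /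
        Real.sqrt (2 * Real.pi * (D * (T - t) * (1 - (T - t) / T))) )
      = Real.exp (-a ^ 2 / (2 * D * t * (1 - t / T))) /
        Real.sqrt (2 * Real.pi * (D * t * (1 - t / T))) := by
  have h1 : D * (T - t) * (1 - (T - t) / T) = D * t * (1 - t / T) := by
    have := hsym D T hT t
    linarith
  rw [h1, hsym D T hT t]
  simp

lemma hsym2 (D T : ℝ) (hT : 0 < T) (t : ℝ) :
    2 * Real.pi * D * (T - t) * (1 - (T - t) / T) = 2 * Real.pi * D * t * (1 - t / T) := by
  field_simp
  ring

lemma refl_pointwise2 (D T : ℝ) (hT : 0 < T) (a : ℝ) (t : ℝ) :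
    |(-1 : ℝ)| • (Real.exp (-a ^ 2 / (2 * D * (T - t) * (1 - (T - t) / T))) /
        Real.sqrt (2 * Real.pi * D * (T - t) * (1 - (T - t) / T)))
      = Real.exp (-a ^ 2 / (2 * D * t * (1 - t / T))) /
        Real.sqrt (2 * Real.pi * D * t * (1 - t / T)) := by
  rw [hsym D T hT t, hsym2 D T hT t]
  simp

theorem bridge_G_formula (D T : ℝ) (hD : 0 < D) (hT : 0 < T) (a : ℝ) (ha : 0 < a) :
    ∫ t in Set.Ioo (0 : ℝ) T,
        Real.exp (-a ^ 2 / (2 * D * t * (1 - t / T))) /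
          Real.sqrt (2 * Real.pi * D * t * (1 - t / T))
      = (2 / D) * ∫ x in Set.Ioi a, Real.exp (-(2 * x ^ 2) / (T * D)) := by
  have hc : (0:ℝ) < 2 / (T * D) := by positivity
  have hunion : Set.Ioo (0:ℝ) T = Set.Ioo 0 (T / 2) ∪ Set.Ico (T / 2) T :=
    (Set.Ioo_union_Ico_eq_Ioo (by linarith) (by linarith)).symm
  have hinjrefl : Set.InjOn (fun t : ℝ => T - t) (Set.Ioo 0 (T / 2)) := by
    intro x _ y _ h
    simp only at h
    linarith
  have hI1 := half_integrable D T hD hT a ha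
  have hIrefl : IntegrableOn (fun t => Real.exp (-a ^ 2 / (2 * D * t * (1 - t / T))) /
      Real.sqrt (2 * Real.pi * D * t * (1 - t / T))) (Set.Ioo (T / 2) T) := by
    rw [← refl_img T, integrableOn_image_iff_integrableOn_abs_deriv_smul measurableSet_Ioo
      (fun t _ => (refl_deriv T t).hasDerivWithinAt) hinjrefl]
    exact hI1.congr (Filter.Eventually.of_forall fun t => (refl_pointwise2 D T hT a t).symm)
  have hI2 : IntegrableOn (fun t => Real.exp (-a ^ 2 / (2 * D * t * (1 - t / T))) /
      Real.sqrt (2 * Real.pi * D * t * (1 - t / T))) (Set.Ico (T / 2) T) :=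
    (integrableOn_Ico_iff_integrableOn_Ioo).2 hIrefl
  have hdisj : Disjoint (Set.Ioo (0:ℝ) (T / 2)) (Set.Ico (T / 2) T) := by
    apply Set.disjoint_left.mpr
    rintro x ⟨_, h2⟩ ⟨h3, _⟩
    exact absurd h3 (not_le.2 h2)
  rw [hunion, setIntegral_union hdisj measurableSet_Ico hI1 hI2, integral_Ico_eq_integral_Ioo]
  have hrefl : (∫ t in Set.Ioo (T / 2) T, Real.exp (-a ^ 2 / (2 * D * t * (1 - t / T))) /
        Real.sqrt (2 * Real.pi * D * t * (1 - t / T)))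
      = ∫ t in Set.Ioo 0 (T / 2), Real.exp (-a ^ 2 / (2 * D * t * (1 - t / T))) /
        Real.sqrt (2 * Real.pi * D * t * (1 - t / T)) := by
    rw [← refl_img T, integral_image_eq_integral_abs_deriv_smul measurableSet_Ioo
      (fun t _ => (refl_deriv T t).hasDerivWithinAt) hinjrefl]
    exact setIntegral_congr_fun measurableSet_Ioo fun t _ => refl_pointwise2 D T hT a t
  rw [hrefl, half_integral D T hD hT a ha, aux_star (2 / (T * D)) a hc ha]
  have hfe : (fun x : ℝ => Real.exp (-(2 / (T * D)) * x ^ 2))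
      = fun x : ℝ => Real.exp (-(2 * x ^ 2) / (T * D)) := by
    funext x
    congr 1
    ring
  rw [hfe]
  have hSpos : (0:ℝ) < Real.sqrt (Real.pi * D * T / 2) := Real.sqrt_pos.2 (by positivity)
  have h1 : Real.sqrt (Real.pi * (2 / (T * D)))
      = Real.sqrt (Real.pi * D * T / 2) * (2 / (T * D)) := by
    rw [show Real.pi * (2 / (T * D)) = (Real.pi * D * T / 2) * (2 / (T * D)) ^ 2 by
      field_simp]
    rw [Real.sqrt_mul (by positivity), Real.sqrt_sq (by positivity)]
  rw [h1]
  field_simp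
  ring
end

section
/- For σ>0, D>0 and s>0, with r = (D/σ^2)s, the Gaussian-averaged expected hitting time ∫_ℝ (1/r)(e^{sqrt(2r/D)|a|}-1)(e^{-a^2/(2σ^2)}/(sqrt(2π)σ)) da equals (σ^2/D) * ((2 e^s ∫_{-sqrt(2s)}^∞ e^{-x^2/2}/sqrt(2π) dx - 1)/s). -/
set_option maxHeartbeats 1000000


open MeasureTheory Set

theorem poisson_reset_gaussian_average_scaled
    (σ D s r : ℝ) (hσ : 0 < σ) (hD : 0 < D) (hs : 0 < s) (hr : r = (D / σ ^ 2) * s) :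
    ∫ a : ℝ, (1 / r) * (Real.exp (Real.sqrt (2 * r / D) * |a|) - 1) *
        (Real.exp (-a ^ 2 / (2 * σ ^ 2)) / (Real.sqrt (2 * Real.pi) * σ))
      = (σ ^ 2 / D) *
          ((2 * Real.exp s *
              (∫ x in Set.Ioi (-Real.sqrt (2 * s)),
                  Real.exp (-x ^ 2 / 2) / Real.sqrt (2 * Real.pi)) - 1) / s) := by
  have hσ0 : σ ≠ 0 := hσ.ne'
  have hσ2 : (0:ℝ) < σ ^ 2 := by positivity
  have h2s : (0:ℝ) ≤ 2 * s := by positivity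
  set u : ℝ := Real.sqrt (2 * s) with hu_def
  have hu2 : u ^ 2 = 2 * s := Real.sq_sqrt h2s
  set c : ℝ := u / σ with hc_def
  set m : ℝ := u * σ with hm_def
  set G : ℝ → ℝ := fun y => Real.exp (-y ^ 2 / (2 * σ ^ 2)) / (Real.sqrt (2 * Real.pi) * σ)
    with hG_def
  have hsqrtpos : (0:ℝ) < Real.sqrt (2 * Real.pi) := Real.sqrt_pos.mpr (by positivity)
  -- sqrt simplification
  have hcs : Real.sqrt (2 * r / D) = c := by
    have h1 : 2 * r / D = 2 * s / σ ^ 2 := by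
      rw [hr]; field_simp
    rw [h1, Real.sqrt_div h2s, Real.sqrt_sq hσ.le]
  -- integrability of G
  have hG_int : Integrable G := by
    have h := (integrable_exp_neg_mul_sq (b := 1 / (2 * σ ^ 2)) (by positivity)).mul_const
      ((Real.sqrt (2 * Real.pi) * σ)⁻¹)
    refine h.congr (Filter.Eventually.of_forall fun y => ?_)
    simp only [hG_def, div_eq_mul_inv]
    congr 2
    ring
  -- translated integrability
  have hGm_int : Integrable (fun a => G (a - m)) := hG_int.comp_sub_right m
  -- half-gaussian integral
  have hhalf : ∫ a in Ioi (0:ℝ), G a = 1 / 2 := by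
    have h := integral_gaussian_Ioi (1 / (2 * σ ^ 2))
    have heq : ∫ a in Ioi (0:ℝ), G a
        = (∫ a in Ioi (0:ℝ), Real.exp (-(1 / (2 * σ ^ 2)) * a ^ 2)) / (Real.sqrt (2 * Real.pi) * σ) := by
      rw [← integral_div]
      refine setIntegral_congr_fun measurableSet_Ioi fun a _ => ?_
      simp only [hG_def]
      congr 2
      ring
    rw [heq, h]
    have : Real.sqrt (Real.pi / (1 / (2 * σ ^ 2))) = Real.sqrt (2 * Real.pi) * σ := by
      rw [show Real.pi / (1 / (2 * σ ^ 2)) = (2 * Real.pi) * σ ^ 2 by field_simp,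
        Real.sqrt_mul (by positivity), Real.sqrt_sq hσ.le]
    rw [this]
    field_simp
  -- the RHS integral equals ∫ G over Ioi (-m)
  have hQ : (∫ x in Set.Ioi (-u), Real.exp (-x ^ 2 / 2) / Real.sqrt (2 * Real.pi))
      = ∫ y in Ioi (-m), G y := by
    have h := integral_comp_mul_left_Ioi G (-u) hσ
    have h2 : ∀ x : ℝ, G (σ * x) = σ⁻¹ * (Real.exp (-x ^ 2 / 2) / Real.sqrt (2 * Real.pi)) := by
      intro x
      simp only [hG_def]
      rw [show -(σ * x) ^ 2 / (2 * σ ^ 2) = -x ^ 2 / 2 by field_simp]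
      field_simp
    simp only [h2] at h
    rw [integral_const_mul] at h
    have hm' : σ * (-u) = -m := by rw [hm_def]; ring
    rw [hm'] at h
    have := congrArg (fun z => σ * z) h
    simpa [smul_eq_mul, ← mul_assoc, mul_inv_cancel₀ hσ0] using this
  -- translation
  have htrans : ∫ a in Ioi (0:ℝ), G (a - m) = ∫ y in Ioi (-m), G y := by
    rw [← integral_indicator measurableSet_Ioi, ← integral_indicator measurableSet_Ioi]
    rw [← integral_add_right_eq_self (fun x => Set.indicator (Ioi (0:ℝ)) (fun a => G (a - m)) x) m]
    congr 1
    funext x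
    by_cases h : x ∈ Ioi (-m)
    · rw [Set.indicator_of_mem h,
        Set.indicator_of_mem (show x + m ∈ Ioi (0:ℝ) by
          simp only [mem_Ioi] at h ⊢; linarith), add_sub_cancel_right]
    · rw [Set.indicator_of_notMem h, Set.indicator_of_notMem]
      simp only [mem_Ioi, not_lt] at h ⊢
      linarith
  -- pointwise identity on the integrand
  have hF : ∀ a : ℝ, (1 / r) * (Real.exp (c * a) - 1) * G a
      = (1 / r) * Real.exp s * G (a - m) - (1 / r) * G a := by
    intro a
    have hexp : Real.exp (c * a) * Real.exp (-a ^ 2 / (2 * σ ^ 2))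
        = Real.exp s * Real.exp (-(a - m) ^ 2 / (2 * σ ^ 2)) := by
      rw [← Real.exp_add, ← Real.exp_add]
      congr 1
      rw [hc_def, hm_def]
      have : s = u ^ 2 / 2 := by rw [hu2]; ring
      rw [this]
      field_simp
      ring
    simp only [hG_def]
    linear_combination (1 / (r * (Real.sqrt (2 * Real.pi) * σ))) * hexp
  -- rewrite LHS as integral of F ∘ |·|
  have hLHS : (∫ a : ℝ, (1 / r) * (Real.exp (Real.sqrt (2 * r / D) * |a|) - 1) *
        (Real.exp (-a ^ 2 / (2 * σ ^ 2)) / (Real.sqrt (2 * Real.pi) * σ)))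
      = ∫ a : ℝ, (1 / r) * (Real.exp (c * |a|) - 1) * G |a| := by
    congr 1
    funext a
    rw [hcs]
    simp only [hG_def]
    rw [sq_abs]
  rw [hLHS, integral_comp_abs (f := fun t => 1 / r * (Real.exp (c * t) - 1) * G t)]
  have hsplit : ∫ a in Ioi (0:ℝ), (1 / r) * (Real.exp (c * a) - 1) * G a
      = (1 / r) * Real.exp s * (∫ a in Ioi (0:ℝ), G (a - m)) - (1 / r) * ∫ a in Ioi (0:ℝ), G a := by
    have h1 : IntegrableOn (fun a => (1 / r) * Real.exp s * G (a - m)) (Ioi (0:ℝ)) :=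
      (hGm_int.const_mul _).integrableOn
    have h2 : IntegrableOn (fun a => (1 / r) * G a) (Ioi (0:ℝ)) :=
      (hG_int.const_mul _).integrableOn
    calc ∫ a in Ioi (0:ℝ), (1 / r) * (Real.exp (c * a) - 1) * G a
        = ∫ a in Ioi (0:ℝ), ((1 / r) * Real.exp s * G (a - m) - (1 / r) * G a) := by
          refine setIntegral_congr_fun measurableSet_Ioi fun a _ => hF a
      _ = _ := by rw [integral_sub h1 h2, integral_const_mul, integral_const_mul]
  rw [hsplit, htrans, hhalf, ← hQ]
  have hrval : r = D * s / σ ^ 2 := by rw [hr]; ring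
  have hrpos : 0 < r := by rw [hrval]; positivity
  rw [hrval]
  field_simp
end

section
/- Let D,T,σ>0 with T > 4σ^2/D. Then 2 ∫_0^∞ a e^{2a^2/(DT)} (∫_0^T exp(-a^2/(2Dt(1-t/T)))/sqrt(2πDt(1-t/T)) dt) * e^{-a^2/(2σ^2)}/(sqrt(2π)σ) da = Tσ/(sqrt(DT) + 2σ). -/
open MeasureTheory

namespace BBAux

open Set Filter

noncomputable def Qf (D T σ t : ℝ) : ℝ := σ^2*(T-2*t)^2 + D*T*(t*(T-t))
noncomputable def Kf (D T σ t : ℝ) : ℝ := Qf D T σ t / (2*(D*T*(t*(T-t)))*σ^2)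
noncomputable def Cf (D T σ t : ℝ) : ℝ :=
  (Real.sqrt (2*Real.pi*D*t*(1-t/T)) * (Real.sqrt (2*Real.pi)*σ))⁻¹
noncomputable def Ff (D T σ a t : ℝ) : ℝ := a * Real.exp (-(Kf D T σ t * a^2)) * Cf D T σ t
noncomputable def gf (D T σ t : ℝ) : ℝ :=
  σ*T*Real.sqrt (D*T)/Real.pi * (Real.sqrt (t*(T-t)) / Qf D T σ t)
noncomputable def uf (T t : ℝ) : ℝ := (2*t-T)/Real.sqrt (t*(T-t))
noncomputable def Fa (D T σ t : ℝ) : ℝ :=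
  (2*σ*T*Real.sqrt (D*T)/(Real.pi*(D*T-4*σ^2))) *
    ((1/2)*Real.arctan (uf T t/2) - (σ/Real.sqrt (D*T))*Real.arctan ((σ/Real.sqrt (D*T))*uf T t))

lemma gauss_int {k : ℝ} (hk : 0 < k) :
    IntegrableOn (fun a => a * Real.exp (-(k * a^2))) (Set.Ioi (0:ℝ)) ∧
    ∫ a in Set.Ioi (0:ℝ), a * Real.exp (-(k * a^2)) = 1/(2*k) := by
  have hderiv : ∀ x ∈ Set.Ici (0:ℝ),
      HasDerivAt (fun a => -Real.exp (-(k*a^2))/(2*k)) (x * Real.exp (-(k*x^2))) x := by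
    intro x _
    have h1 : HasDerivAt (fun a : ℝ => -(k*a^2)) (-(k*(2*x))) x := by
      refine ((hasDerivAt_pow 2 x).const_mul k).neg.congr_deriv ?_
      norm_num
    have h2 := (h1.exp.neg).div_const (2*k)
    refine h2.congr_deriv ?_
    field_simp
  have hpos : ∀ x ∈ Set.Ioi (0:ℝ), 0 ≤ x * Real.exp (-(k*x^2)) := by
    intro x hx
    have : (0:ℝ) < x := hx
    positivity
  have htend : Tendsto (fun a => -Real.exp (-(k*a^2))/(2*k)) atTop (nhds 0) := by
    have h1 : Tendsto (fun a : ℝ => -(k*a^2)) atTop atBot := by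
      have := (tendsto_pow_atTop (two_ne_zero)).const_mul_atTop hk
      exact tendsto_neg_atBot_iff.mpr this
    have := (Real.tendsto_exp_atBot.comp h1).neg.div_const (2*k)
    simpa using this
  have hint := integrableOn_Ioi_deriv_of_nonneg' hderiv hpos htend
  refine ⟨hint, ?_⟩
  rw [integral_Ioi_of_hasDerivAt_of_tendsto' hderiv hint htend]
  simp [Real.exp_zero]
  ring

lemma Fa_deriv (D T σ : ℝ) (hD : 0 < D) (hT : 0 < T) (hσ : 0 < σ)
    (h4 : 4*σ^2 < D*T) {t : ℝ} (ht : t ∈ Set.Ioo 0 T) :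
    HasDerivAt (Fa D T σ) (gf D T σ t) t := by
  obtain ⟨ht0, htT⟩ := ht
  have hπ := Real.pi_pos
  have hDT : 0 < D*T := by positivity
  have hw2pos : 0 < t*(T-t) := by nlinarith
  set w := Real.sqrt (t*(T-t)) with hw
  have hwpos : 0 < w := Real.sqrt_pos.mpr hw2pos
  have hw2 : w^2 = t*(T-t) := Real.sq_sqrt hw2pos.le
  set r := Real.sqrt (D*T) with hrdef
  have hrpos : 0 < r := Real.sqrt_pos.mpr hDT
  have hr2 : r^2 = D*T := Real.sq_sqrt hDT.le
  have hq : HasDerivAt (fun x => x*(T-x)) (T-2*t) t := by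
    have := (hasDerivAt_id t).mul ((hasDerivAt_const t T).sub (hasDerivAt_id t))
    refine this.congr_deriv ?_; simp [id]; ring
  have hw' : HasDerivAt (fun x => Real.sqrt (x*(T-x))) ((T-2*t)/(2*w)) t :=
    hq.sqrt hw2pos.ne'
  have hnum : HasDerivAt (fun x : ℝ => 2*x-T) 2 t := by
    simpa using ((hasDerivAt_id t).const_mul 2).sub_const T
  have hu : HasDerivAt (uf T) (T^2/(2*w^3)) t := by
    have h2 := hnum.div hw' hwpos.ne'
    have : HasDerivAt (fun x => (2*x-T)/Real.sqrt (x*(T-x)))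
        ((2 * Real.sqrt (t*(T-t)) - (2*t-T) * ((T-2*t)/(2*w))) / Real.sqrt (t*(T-t)) ^ 2) t := h2
    refine this.congr_deriv ?_
    rw [← hw]
    field_simp
    linear_combination 4 * hw2
  have hQpos : 0 < σ^2*(T-2*t)^2 + D*T*(t*(T-t)) := by
    nlinarith [mul_pos hDT hw2pos, mul_nonneg (sq_nonneg σ) (sq_nonneg (T-2*t))]
  have h4' : D*T - 4*σ^2 ≠ 0 := by nlinarith
  have hd1 : HasDerivAt (fun x => Real.arctan (uf T x/2))
      (1/(1+(uf T t/2)^2) * (T^2/(2*w^3)/2)) t := (hu.div_const 2).arctan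
  have hd2 : HasDerivAt (fun x => Real.arctan ((σ/r)*uf T x))
      (1/(1+((σ/r)*uf T t)^2) * ((σ/r)*(T^2/(2*w^3)))) t := (hu.const_mul (σ/r)).arctan
  have htot := ((hd1.const_mul ((1:ℝ)/2)).sub (hd2.const_mul (σ/r))).const_mul
      (2*σ*T*r/(Real.pi*(D*T-4*σ^2)))
  have hFa : Fa D T σ = fun x => (2*σ*T*r/(Real.pi*(D*T-4*σ^2))) *
      ((1/2)*Real.arctan (uf T x/2) - (σ/r)*Real.arctan ((σ/r)*uf T x)) := by
    funext x; rw [Fa, hrdef]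
  rw [hFa]
  refine htot.congr_deriv ?_
  have hu2 : uf T t = (2*t-T)/w := by rw [uf, hw]
  have hcc : (σ/r)^2 = σ^2/(D*T) := by rw [div_pow, hr2]
  have e1 : 1+(uf T t/2)^2 = T^2/(2*w)^2 := by
    rw [hu2]; field_simp; linear_combination 4 * hw2
  have e2 : 1+((σ/r)*uf T t)^2 = (σ^2*(T-2*t)^2 + D*T*(t*(T-t)))/(D*T*w^2) := by
    rw [mul_pow, hcc, hu2, div_pow]
    field_simp
    linear_combination (D*T:ℝ) * hw2
  rw [e1, e2]
  have s1 : 1/(T^2/(2*w)^2) * (T^2/(2*w^3)/2) = 1/w := by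
    field_simp
  have s2 : 1/((σ^2*(T-2*t)^2 + D*T*(t*(T-t)))/(D*T*w^2)) * (σ/r*(T^2/(2*w^3)))
      = D*T*σ*T^2/(r*((σ^2*(T-2*t)^2 + D*T*(t*(T-t)))*(2*w))) := by
    rw [one_div_div]
    field_simp
  rw [s1, s2, gf, Qf, ← hw, ← hrdef, ← hw2, ← hr2]
  have h4r : r^2 - 4*σ^2 ≠ 0 := by rw [hr2]; exact h4'
  have hQr : σ^2*(T-2*t)^2 + r^2*w^2 ≠ 0 := by
    rw [hr2, hw2]; exact hQpos.ne'
  field_simp [h4r, hQr]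
  rw [div_eq_iff (by rwa [mul_comm] at h4r)]
  linear_combination 4*σ^2 * hw2

lemma Qf_pos (D T σ : ℝ) (hD : 0 < D) (hT : 0 < T) (hσ : 0 < σ) {t : ℝ}
    (ht : t ∈ Set.Icc 0 T) : 0 < Qf D T σ t := by
  obtain ⟨ht0, htT⟩ := ht
  have hDT : 0 < D*T := by positivity
  rw [Qf]
  nlinarith [mul_nonneg hDT.le (mul_nonneg ht0 (by linarith : (0:ℝ) ≤ T - t)),
    mul_nonneg (sq_nonneg σ) (sq_nonneg (T-2*t)), sq_nonneg (T-2*t), mul_pos hD hT,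
    mul_pos (mul_pos hσ hσ) (mul_pos hT hT)]

lemma gf_contOn (D T σ : ℝ) (hD : 0 < D) (hT : 0 < T) (hσ : 0 < σ) :
    ContinuousOn (gf D T σ) (Set.Icc 0 T) := by
  have h1 : ContinuousOn (fun t => Real.sqrt (t*(T-t))) (Set.Icc 0 T) :=
    (Real.continuous_sqrt.comp (continuous_id.mul (continuous_const.sub continuous_id))).continuousOn
  have h2 : ContinuousOn (Qf D T σ) (Set.Icc 0 T) := by
    apply Continuous.continuousOn
    unfold Qf
    continuity
  exact continuousOn_const.mul (h1.div h2 (fun t ht => (Qf_pos D T σ hD hT hσ ht).ne'))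

lemma Kf_pos (D T σ : ℝ) (hD : 0 < D) (hT : 0 < T) (hσ : 0 < σ) {t : ℝ}
    (ht : t ∈ Set.Ioo 0 T) : 0 < Kf D T σ t := by
  obtain ⟨ht0, htT⟩ := ht
  have hw2pos : 0 < t*(T-t) := by nlinarith
  have := Qf_pos D T σ hD hT hσ (Set.mem_Icc.mpr ⟨ht0.le, htT.le⟩)
  rw [Kf]
  have hden : 0 < 2*(D*T*(t*(T-t)))*σ^2 := by positivity
  positivity

lemma CK_eq (D T σ : ℝ) (hD : 0 < D) (hT : 0 < T) (hσ : 0 < σ) {t : ℝ}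
    (ht : t ∈ Set.Ioo 0 T) :
    2 * (1/(2*Kf D T σ t) * Cf D T σ t) = gf D T σ t := by
  obtain ⟨ht0, htT⟩ := ht
  have hπ := Real.pi_pos
  have hDT : 0 < D*T := by positivity
  have hw2pos : 0 < t*(T-t) := by nlinarith
  set w := Real.sqrt (t*(T-t)) with hw
  have hwpos : 0 < w := Real.sqrt_pos.mpr hw2pos
  have hw2 : w^2 = t*(T-t) := Real.sq_sqrt hw2pos.le
  set r := Real.sqrt (D*T) with hrdef
  have hrpos : 0 < r := Real.sqrt_pos.mpr hDT
  have hr2 : r^2 = D*T := Real.sq_sqrt hDT.le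
  set p := Real.sqrt (2*Real.pi) with hpdef
  have hppos : 0 < p := Real.sqrt_pos.mpr (by positivity)
  have hp2 : p^2 = 2*Real.pi := Real.sq_sqrt (by positivity)
  have hQpos := Qf_pos D T σ hD hT hσ (Set.mem_Icc.mpr ⟨ht0.le, htT.le⟩)
  have hDdivT : Real.sqrt (D/T) = r/T := by
    rw [show D/T = (r/T)^2 by rw [div_pow, hr2]; field_simp]
    exact Real.sqrt_sq (by positivity)
  have hsq : Real.sqrt (2*Real.pi*D*t*(1-t/T)) = p * ((r/T) * w) := by
    rw [show 2*Real.pi*D*t*(1-t/T) = (2*Real.pi)*((D/T)*(t*(T-t))) by field_simp]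
    rw [Real.sqrt_mul (show (0:ℝ) ≤ 2*Real.pi by positivity) ((D/T)*(t*(T-t))),
      Real.sqrt_mul (show (0:ℝ) ≤ D/T by positivity) (t*(T-t)), hDdivT, ← hw, ← hpdef]
  rw [Cf, hsq, Kf, gf, Qf, ← hpdef, ← hw, ← hrdef, ← hw2, ← hr2]
  have hQr : σ^2*(T-2*t)^2 + r^2*w^2 ≠ 0 := by
    rw [hr2, hw2]; exact hQpos.ne'
  have hKne : Kf D T σ t ≠ 0 := (Kf_pos D T σ hD hT hσ ⟨ht0, htT⟩).ne'
  field_simp [hQr]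
  linear_combination (-1:ℝ) * hp2

lemma sqrt_tendsto_zero_right (T : ℝ) (hT : 0 < T) :
    Tendsto (fun x => Real.sqrt (x*(T-x))) (nhdsWithin (0:ℝ) (Set.Ioi 0)) (nhdsWithin 0 (Set.Ioi 0)) := by
  rw [tendsto_nhdsWithin_iff]
  constructor
  · have hcont : Continuous (fun x : ℝ => Real.sqrt (x*(T-x))) := by
      exact Real.continuous_sqrt.comp (continuous_id.mul (continuous_const.sub continuous_id))
    have h0 := hcont.tendsto 0
    have he : Real.sqrt ((0:ℝ)*(T-0)) = 0 := by simp
    rw [he] at h0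
    exact h0.mono_left nhdsWithin_le_nhds
  · filter_upwards [Ioo_mem_nhdsGT_of_mem (Set.mem_Ico.mpr ⟨le_refl (0:ℝ), hT⟩)] with x hx
    have : 0 < x*(T-x) := by nlinarith [hx.1, hx.2]
    exact Real.sqrt_pos.mpr this

lemma sqrt_tendsto_zero_left (T : ℝ) (hT : 0 < T) :
    Tendsto (fun x => Real.sqrt (x*(T-x))) (nhdsWithin T (Set.Iio T)) (nhdsWithin 0 (Set.Ioi 0)) := by
  rw [tendsto_nhdsWithin_iff]
  constructor
  · have hcont : Continuous (fun x : ℝ => Real.sqrt (x*(T-x))) := by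
      exact Real.continuous_sqrt.comp (continuous_id.mul (continuous_const.sub continuous_id))
    have h0 := hcont.tendsto T
    have he : Real.sqrt (T*(T-T)) = 0 := by simp
    rw [he] at h0
    exact h0.mono_left nhdsWithin_le_nhds
  · filter_upwards [Ioo_mem_nhdsLT_of_mem (Set.mem_Ioc.mpr ⟨hT, le_refl T⟩)] with x hx
    have : 0 < x*(T-x) := by nlinarith [hx.1, hx.2]
    exact Real.sqrt_pos.mpr this

lemma uf_tendsto_bot (T : ℝ) (hT : 0 < T) :
    Tendsto (uf T) (nhdsWithin (0:ℝ) (Set.Ioi 0)) atBot := by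
  have hinv : Tendsto (fun x => (Real.sqrt (x*(T-x)))⁻¹) (nhdsWithin (0:ℝ) (Set.Ioi 0)) atTop :=
    tendsto_inv_nhdsGT_zero.comp (sqrt_tendsto_zero_right T hT)
  have hnum : Tendsto (fun x : ℝ => 2*x-T) (nhdsWithin (0:ℝ) (Set.Ioi 0)) (nhds (-T)) := by
    have hc : Continuous (fun x : ℝ => 2*x-T) := by
      exact (continuous_const.mul continuous_id).sub continuous_const
    have h0 := hc.tendsto 0
    have he : 2*(0:ℝ)-T = -T := by ring
    rw [he] at h0
    exact h0.mono_left nhdsWithin_le_nhds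
  have := hnum.neg_mul_atTop (by linarith : -T < 0) hinv
  have heq : (fun x => (2*x-T) * (Real.sqrt (x*(T-x)))⁻¹) = uf T := by
    funext x; rw [uf, div_eq_mul_inv]
  rwa [heq] at this

lemma uf_tendsto_top (T : ℝ) (hT : 0 < T) :
    Tendsto (uf T) (nhdsWithin T (Set.Iio T)) atTop := by
  have hinv : Tendsto (fun x => (Real.sqrt (x*(T-x)))⁻¹) (nhdsWithin T (Set.Iio T)) atTop :=
    tendsto_inv_nhdsGT_zero.comp (sqrt_tendsto_zero_left T hT)
  have hnum : Tendsto (fun x : ℝ => 2*x-T) (nhdsWithin T (Set.Iio T)) (nhds T) := by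
    have hc : Continuous (fun x : ℝ => 2*x-T) := by
      exact (continuous_const.mul continuous_id).sub continuous_const
    have h0 := hc.tendsto T
    have he : 2*T-T = T := by ring
    rw [he] at h0
    exact h0.mono_left nhdsWithin_le_nhds
  have := hnum.pos_mul_atTop hT hinv
  have heq : (fun x => (2*x-T) * (Real.sqrt (x*(T-x)))⁻¹) = uf T := by
    funext x; rw [uf, div_eq_mul_inv]
  rwa [heq] at this

lemma Fa_tendsto_bot (D T σ : ℝ) (hD : 0 < D) (hT : 0 < T) (hσ : 0 < σ) :
    Tendsto (Fa D T σ) (nhdsWithin (0:ℝ) (Set.Ioi 0))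
      (nhds ((2*σ*T*Real.sqrt (D*T)/(Real.pi*(D*T-4*σ^2))) *
        ((1/2)*(-(Real.pi/2)) - (σ/Real.sqrt (D*T))*(-(Real.pi/2))))) := by
  have hu := uf_tendsto_bot T hT
  have hc : 0 < σ/Real.sqrt (D*T) := by
    have : 0 < Real.sqrt (D*T) := Real.sqrt_pos.mpr (by positivity)
    positivity
  have h1 : Tendsto (fun x => Real.arctan (uf T x/2)) (nhdsWithin (0:ℝ) (Set.Ioi 0))
      (nhds (-(Real.pi/2))) :=
    (tendsto_nhds_of_tendsto_nhdsWithin Real.tendsto_arctan_atBot).comp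
      (hu.atBot_div_const two_pos)
  have h2 : Tendsto (fun x => Real.arctan ((σ/Real.sqrt (D*T))*uf T x))
      (nhdsWithin (0:ℝ) (Set.Ioi 0)) (nhds (-(Real.pi/2))) :=
    (tendsto_nhds_of_tendsto_nhdsWithin Real.tendsto_arctan_atBot).comp
      (hu.const_mul_atBot hc)
  exact (((h1.const_mul (1/2:ℝ)).sub (h2.const_mul (σ/Real.sqrt (D*T)))).const_mul
    (2*σ*T*Real.sqrt (D*T)/(Real.pi*(D*T-4*σ^2))))

lemma Fa_tendsto_top (D T σ : ℝ) (hD : 0 < D) (hT : 0 < T) (hσ : 0 < σ) :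
    Tendsto (Fa D T σ) (nhdsWithin T (Set.Iio T))
      (nhds ((2*σ*T*Real.sqrt (D*T)/(Real.pi*(D*T-4*σ^2))) *
        ((1/2)*(Real.pi/2) - (σ/Real.sqrt (D*T))*(Real.pi/2)))) := by
  have hu := uf_tendsto_top T hT
  have hc : 0 < σ/Real.sqrt (D*T) := by
    have : 0 < Real.sqrt (D*T) := Real.sqrt_pos.mpr (by positivity)
    positivity
  have h1 : Tendsto (fun x => Real.arctan (uf T x/2)) (nhdsWithin T (Set.Iio T))
      (nhds (Real.pi/2)) :=
    (tendsto_nhds_of_tendsto_nhdsWithin Real.tendsto_arctan_atTop).comp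
      (hu.atTop_div_const two_pos)
  have h2 : Tendsto (fun x => Real.arctan ((σ/Real.sqrt (D*T))*uf T x))
      (nhdsWithin T (Set.Iio T)) (nhds (Real.pi/2)) :=
    (tendsto_nhds_of_tendsto_nhdsWithin Real.tendsto_arctan_atTop).comp
      (hu.const_mul_atTop hc)
  exact (((h1.const_mul (1/2:ℝ)).sub (h2.const_mul (σ/Real.sqrt (D*T)))).const_mul
    (2*σ*T*Real.sqrt (D*T)/(Real.pi*(D*T-4*σ^2))))

end BBAux

open BBAux Set Filter in
theorem bb_gaussian_second_term (D T σ : ℝ) (hD : 0 < D) (hT : 0 < T) (hσ : 0 < σ)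
    (h : 4 * σ ^ 2 / D < T) :
    2 * ∫ a in Set.Ioi (0 : ℝ),
        a * Real.exp (2 * a ^ 2 / (D * T)) *
          (∫ t in Set.Ioo (0 : ℝ) T,
            Real.exp (-a ^ 2 / (2 * D * t * (1 - t / T))) /
              Real.sqrt (2 * Real.pi * D * t * (1 - t / T))) *
          (Real.exp (-a ^ 2 / (2 * σ ^ 2)) / (Real.sqrt (2 * Real.pi) * σ))
      = T * σ / (Real.sqrt (D * T) + 2 * σ) := by
  have hπ := Real.pi_pos
  have hDT : 0 < D*T := by positivity
  have h4 : 4*σ^2 < D*T := by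
    have := (div_lt_iff₀ hD).mp h
    nlinarith
  have hrpos : 0 < Real.sqrt (D*T) := Real.sqrt_pos.mpr hDT
  have hr2 : Real.sqrt (D*T)^2 = D*T := Real.sq_sqrt hDT.le
  -- Step 1: rewrite the outer integrand
  have step1 : ∀ a : ℝ,
      a * Real.exp (2 * a ^ 2 / (D * T)) *
          (∫ t in Set.Ioo (0 : ℝ) T,
            Real.exp (-a ^ 2 / (2 * D * t * (1 - t / T))) /
              Real.sqrt (2 * Real.pi * D * t * (1 - t / T))) *
          (Real.exp (-a ^ 2 / (2 * σ ^ 2)) / (Real.sqrt (2 * Real.pi) * σ))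
      = ∫ t in Set.Ioo (0:ℝ) T, Ff D T σ a t := by
    intro a
    rw [← MeasureTheory.integral_const_mul, ← MeasureTheory.integral_mul_const]
    refine (setIntegral_congr_fun measurableSet_Ioo (fun t ht => ?_))
    obtain ⟨ht0, htT⟩ := ht
    have hw2pos : 0 < t*(T-t) := by nlinarith
    have h1t : (1 - t/T) ≠ 0 := by
      have : t/T < 1 := (div_lt_one hT).mpr htT
      linarith
    have hTt : T - t ≠ 0 := ne_of_gt (by linarith)
    have hexp : 2*a^2/(D*T) + (-a^2/(2*D*t*(1-t/T)) + -a^2/(2*σ^2)) = -(Kf D T σ t*a^2) := by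
      rw [Kf, Qf]
      field_simp [hD.ne', hT.ne', hσ.ne', ht0.ne', h1t, hTt]
      ring
    rw [Ff, ← hexp, Real.exp_add, Real.exp_add, Cf]
    ring
  -- measurability
  have hmeas : AEStronglyMeasurable (Function.uncurry (Ff D T σ))
      ((volume.restrict (Set.Ioi (0:ℝ))).prod (volume.restrict (Set.Ioo (0:ℝ) T))) := by
    apply Measurable.aestronglyMeasurable
    unfold Function.uncurry Ff Kf Cf Qf
    fun_prop
  -- value of the inner Gaussian integral
  have key : ∀ t ∈ Set.Ioo (0:ℝ) T,
      (∫ a in Set.Ioi (0:ℝ), Ff D T σ a t) = 1/(2*Kf D T σ t) * Cf D T σ t := by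
    intro t ht
    have hK := Kf_pos D T σ hD hT hσ ht
    simp only [Ff]
    rw [MeasureTheory.integral_mul_const, (gauss_int hK).2]
  have hnorm : ∀ t ∈ Set.Ioo (0:ℝ) T,
      (∫ a in Set.Ioi (0:ℝ), ‖Ff D T σ a t‖) = gf D T σ t / 2 := by
    intro t ht
    have h1 : ∀ a ∈ Set.Ioi (0:ℝ), ‖Ff D T σ a t‖ = Ff D T σ a t := by
      intro a ha
      have ha' : (0:ℝ) < a := ha
      rw [Real.norm_eq_abs, abs_of_nonneg]
      rw [Ff, Cf]
      positivity
    rw [setIntegral_congr_fun measurableSet_Ioi h1, key t ht]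
    have := CK_eq D T σ hD hT hσ ht
    linarith
  -- integrability on the product
  have hInt : Integrable (Function.uncurry (Ff D T σ))
      ((volume.restrict (Set.Ioi (0:ℝ))).prod (volume.restrict (Set.Ioo (0:ℝ) T))) := by
    rw [MeasureTheory.integrable_prod_iff' hmeas]
    constructor
    · rw [ae_restrict_iff' measurableSet_Ioo]
      refine Filter.Eventually.of_forall (fun t ht => ?_)
      have hK := Kf_pos D T σ hD hT hσ ht
      simpa only [Function.uncurry_apply_pair, Ff] using
        ((gauss_int hK).1.mul_const (Cf D T σ t))
    · have hgint : Integrable (fun t => gf D T σ t / 2)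
          (volume.restrict (Set.Ioo (0:ℝ) T)) :=
        (((gf_contOn D T σ hD hT hσ).integrableOn_Icc).mono_set
          Set.Ioo_subset_Icc_self).div_const 2
      refine hgint.congr ?_
      rw [Filter.EventuallyEq, ae_restrict_iff' measurableSet_Ioo]
      refine Filter.Eventually.of_forall (fun t ht => ?_)
      simp only [Function.uncurry_apply_pair]
      exact (hnorm t ht).symm
  have hIntInt : IntervalIntegrable (gf D T σ) volume 0 T := by
    apply ContinuousOn.intervalIntegrable
    rw [Set.uIcc_of_le hT.le]
    exact gf_contOn D T σ hD hT hσ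
  calc 2 * ∫ a in Set.Ioi (0 : ℝ),
        a * Real.exp (2 * a ^ 2 / (D * T)) *
          (∫ t in Set.Ioo (0 : ℝ) T,
            Real.exp (-a ^ 2 / (2 * D * t * (1 - t / T))) /
              Real.sqrt (2 * Real.pi * D * t * (1 - t / T))) *
          (Real.exp (-a ^ 2 / (2 * σ ^ 2)) / (Real.sqrt (2 * Real.pi) * σ))
      = 2 * ∫ a in Set.Ioi (0:ℝ), ∫ t in Set.Ioo (0:ℝ) T, Ff D T σ a t := by
        rw [setIntegral_congr_fun measurableSet_Ioi (fun a _ => step1 a)]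
    _ = 2 * ∫ t in Set.Ioo (0:ℝ) T, ∫ a in Set.Ioi (0:ℝ), Ff D T σ a t := by
        rw [MeasureTheory.integral_integral_swap hInt]
    _ = ∫ t in Set.Ioo (0:ℝ) T, gf D T σ t := by
        rw [← MeasureTheory.integral_const_mul]
        refine setIntegral_congr_fun measurableSet_Ioo (fun t ht => ?_)
        rw [key t ht]
        exact CK_eq D T σ hD hT hσ ht
    _ = T * σ / (Real.sqrt (D * T) + 2 * σ) := by
        rw [← MeasureTheory.integral_Ioc_eq_integral_Ioo,
          ← intervalIntegral.integral_of_le hT.le]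
        rw [intervalIntegral.integral_eq_sub_of_hasDerivAt_of_tendsto hT
          (fun t ht => Fa_deriv D T σ hD hT hσ h4 ht) hIntInt
          (Fa_tendsto_bot D T σ hD hT hσ) (Fa_tendsto_top D T σ hD hT hσ)]
        set r := Real.sqrt (D*T) with hrdef
        have hr2' : D*T = r^2 := (Real.sq_sqrt hDT.le).symm
        have h4r : r^2 - 4*σ^2 ≠ 0 := by rw [← hr2']; nlinarith
        have hrs : r + 2*σ ≠ 0 := by positivity
        rw [hr2']
        field_simp
        rw [div_eq_iff (by rwa [mul_comm] at h4r)]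
        ring
end

section
/- Let D,T,σ>0 with T > 4σ^2/D. The Gaussian average of the expected hitting time of the one-dimensional Brownian bridge reset search process equals T (DT/(DT-4σ^2))^{1/2} - T + Tσ/(sqrt(DT)+2σ); if T ≤ 4σ^2/D the average is infinite. -/
open MeasureTheory

noncomputable def Kb (b : ℝ) (y : ℝ) : ℝ := ∫ x in Set.Ioi y, Real.exp (-b * x ^ 2)

lemma Kb_hasDerivAt {b : ℝ} (hb : 0 < b) (y : ℝ) :
    HasDerivAt (Kb b) (-Real.exp (-b * y ^ 2)) y := by
  have hint : Integrable (fun x : ℝ => Real.exp (-b * x ^ 2)) := integrable_exp_neg_mul_sq hb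
  have hcont : Continuous (fun x : ℝ => Real.exp (-b * x ^ 2)) := by continuity
  have heq : ∀ z : ℝ, Kb b z =
      (∫ x : ℝ, Real.exp (-b * x ^ 2)) - ((∫ x in Set.Iic (0:ℝ), Real.exp (-b * x ^ 2))
        + ∫ x in (0:ℝ)..z, Real.exp (-b * x ^ 2)) := by
    intro z
    have h1 := intervalIntegral.integral_Iic_add_Ioi (hint.integrableOn (s := Set.Iic z))
      (hint.integrableOn (s := Set.Ioi z))
    have h2 := intervalIntegral.integral_Iic_sub_Iic
      (hint.integrableOn (s := Set.Iic (0:ℝ))) (hint.integrableOn (s := Set.Iic z))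
    unfold Kb
    linarith
  have hd : HasDerivAt (fun z => (∫ x : ℝ, Real.exp (-b * x ^ 2)) -
      ((∫ x in Set.Iic (0:ℝ), Real.exp (-b * x ^ 2))
        + ∫ x in (0:ℝ)..z, Real.exp (-b * x ^ 2))) (-Real.exp (-b * y ^ 2)) y := by
    have := (intervalIntegral.integral_hasDerivAt_right
      (hint.intervalIntegrable (a := 0) (b := y))
      hcont.aestronglyMeasurable.stronglyMeasurableAtFilter hcont.continuousAt)
    exact (this.const_add (∫ x in Set.Iic (0:ℝ), Real.exp (-b * x ^ 2))).const_sub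
      (∫ x : ℝ, Real.exp (-b * x ^ 2))
  exact hd.congr_of_eventuallyEq (Filter.Eventually.of_forall heq)

lemma Kb_nonneg (b y : ℝ) : 0 ≤ Kb b y :=
  setIntegral_nonneg measurableSet_Ioi (fun x _ => (Real.exp_pos _).le)

lemma Kb_le {b : ℝ} (hb : 0 < b) {y : ℝ} (hy : 0 ≤ y) : Kb b y ≤ Kb b 0 := by
  apply setIntegral_mono_set ((integrable_exp_neg_mul_sq hb).integrableOn)
    (Filter.Eventually.of_forall fun x => (Real.exp_pos _).le)
  exact HasSubset.Subset.eventuallyLE (Set.Ioi_subset_Ioi hy)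

lemma Kb_zero {b : ℝ} : Kb b 0 = Real.sqrt (Real.pi / b) / 2 := integral_gaussian_Ioi b

lemma Kb_continuous {b : ℝ} (hb : 0 < b) : Continuous (Kb b) := by
  have : Differentiable ℝ (Kb b) := fun y => (Kb_hasDerivAt hb y).differentiableAt
  exact this.continuous

/-- Integration by parts on `(0, ∞)`. -/
lemma parts {b c : ℝ} (hb : 0 < b) (hc : 0 < c) :
    ∫ a in Set.Ioi (0:ℝ), a * Real.exp (-c * a ^ 2) * Kb b a
      = Kb b 0 / (2 * c) - (Real.sqrt (Real.pi / (c + b)) / 2) / (2 * c) := by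
  set F : ℝ → ℝ := fun y => -(Real.exp (-c * y ^ 2) * Kb b y) / (2 * c) with hF
  set f : ℝ → ℝ := fun y => y * Real.exp (-c * y ^ 2) * Kb b y
      + Real.exp (-(c + b) * y ^ 2) / (2 * c) with hf
  have hFd : ∀ y : ℝ, HasDerivAt F (f y) y := by
    intro y
    have h1 : HasDerivAt (fun y : ℝ => -c * y ^ 2) (-c * (2 * y)) y := by
      simpa using (hasDerivAt_pow 2 y).const_mul (-c)
    have h2 : HasDerivAt (fun y : ℝ => Real.exp (-c * y ^ 2))
        (Real.exp (-c * y ^ 2) * (-c * (2 * y))) y := h1.exp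
    have h3 := (h2.mul (Kb_hasDerivAt hb y)).neg.div_const (2 * c)
    refine h3.congr_deriv ?_
    simp only [hf]
    rw [show -(c + b) * y ^ 2 = (-c * y ^ 2) + (-b * y ^ 2) by ring, Real.exp_add]
    field_simp
    ring
  have hbound : ∀ y ∈ Set.Ioi (0:ℝ),
      ‖y * Real.exp (-c * y ^ 2) * Kb b y‖ ≤ Kb b 0 * (y * Real.exp (-c * y ^ 2)) := by
    intro y hy
    have hy0 : (0:ℝ) < y := hy
    have hK0 := Kb_nonneg b y
    rw [Real.norm_eq_abs, abs_of_nonneg (by positivity)]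
    have h := Kb_le hb hy0.le
    have hye : 0 ≤ y * Real.exp (-c * y ^ 2) := by positivity
    nlinarith
  have ht1meas : AEStronglyMeasurable (fun y : ℝ => y * Real.exp (-c * y ^ 2) * Kb b y)
      (volume.restrict (Set.Ioi (0:ℝ))) := by
    exact ((continuous_id.mul (by continuity)).mul (Kb_continuous hb)).aestronglyMeasurable.restrict
  have hgint : IntegrableOn (fun y : ℝ => Kb b 0 * (y * Real.exp (-c * y ^ 2))) (Set.Ioi 0) := by
    have h := integrableOn_rpow_mul_exp_neg_mul_sq hc (s := 1) (by norm_num)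
    simp_rw [Real.rpow_one] at h
    exact h.const_mul _
  have ht1int : IntegrableOn (fun y : ℝ => y * Real.exp (-c * y ^ 2) * Kb b y) (Set.Ioi 0) := by
    refine Integrable.mono' hgint ht1meas ?_
    filter_upwards [ae_restrict_mem measurableSet_Ioi] with y hy using hbound y hy
  have ht2int : IntegrableOn (fun y : ℝ => Real.exp (-(c + b) * y ^ 2) / (2 * c)) (Set.Ioi 0) :=
    ((integrable_exp_neg_mul_sq (by positivity)).div_const _).integrableOn
  have hfint : IntegrableOn f (Set.Ioi 0) := ht1int.add ht2int
  have hexp0 : Filter.Tendsto (fun y : ℝ => Real.exp (-c * y ^ 2)) Filter.atTop (nhds 0) := by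
    have h1 : Filter.Tendsto (fun y : ℝ => -c * y ^ 2) Filter.atTop Filter.atBot := by
      have := (Filter.tendsto_pow_atTop (n := 2) (by norm_num) :
        Filter.Tendsto (fun y : ℝ => y ^ 2) Filter.atTop Filter.atTop)
      exact Filter.Tendsto.const_mul_atTop_of_neg (by linarith) this
    exact Real.tendsto_exp_atBot.comp h1
  have hF0 : Filter.Tendsto F Filter.atTop (nhds 0) := by
    apply squeeze_zero_norm' (a := fun y => Kb b 0 / (2 * c) * Real.exp (-c * y ^ 2))
    · filter_upwards [Filter.Ioi_mem_atTop (0:ℝ)] with y hy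
      have hy0 : (0:ℝ) < y := hy
      have hK0 := Kb_nonneg b y
      have hKle := Kb_le hb hy0.le
      have he : (0:ℝ) < Real.exp (-c * y ^ 2) := Real.exp_pos _
      simp only [hF, Real.norm_eq_abs, abs_div, abs_neg, abs_mul,
        abs_of_nonneg he.le, abs_of_nonneg hK0, abs_of_pos (by positivity : (0:ℝ) < 2 * c)]
      calc Real.exp (-c * y ^ 2) * Kb b y / (2 * c)
          ≤ Real.exp (-c * y ^ 2) * Kb b 0 / (2 * c) := by gcongr
        _ = Kb b 0 / (2 * c) * Real.exp (-c * y ^ 2) := by ring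
    · simpa using tendsto_const_nhds.mul hexp0
  have key := integral_Ioi_of_hasDerivAt_of_tendsto' (a := 0) (fun y _ => hFd y) hfint hF0
  have hsplit : ∫ y in Set.Ioi (0:ℝ), f y
      = (∫ y in Set.Ioi (0:ℝ), y * Real.exp (-c * y ^ 2) * Kb b y)
        + ∫ y in Set.Ioi (0:ℝ), Real.exp (-(c + b) * y ^ 2) / (2 * c) :=
    integral_add ht1int ht2int
  have ht2val : ∫ y in Set.Ioi (0:ℝ), Real.exp (-(c + b) * y ^ 2) / (2 * c)
      = (Real.sqrt (Real.pi / (c + b)) / 2) / (2 * c) := by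
    rw [integral_div, integral_gaussian_Ioi]
  have hFzero : F 0 = -(Kb b 0) / (2 * c) := by simp [hF]
  rw [key, hFzero] at hsplit
  rw [ht2val] at hsplit
  simp only [zero_sub, neg_neg, neg_div] at hsplit
  linarith

lemma alg2 {s σ D T : ℝ} (hσ : 0 < σ) (hD : 0 < D) (hT : 0 < T)
    (h1 : s - 2 * σ ≠ 0) (h2 : 0 < s + 2 * σ) :
    (s - 2 * σ) / (2 * D * σ * ((s - 2 * σ) * (s + 2 * σ) / (2 * σ ^ 2 * (D * T))))
      = T * σ / (s + 2 * σ) := by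
  rw [div_eq_div_iff]
  · field_simp
  · positivity
  · exact h2.ne'

set_option maxHeartbeats 1000000 in
/-- The Gaussian average of the expected hitting time of the one-dimensional Brownian
bridge reset search process (whose expected hitting time of `a ≠ 0` is
`T(e^{2a²/(DT)}-1) + (2|a| e^{2a²/(DT)}/D)∫_{|a|}^∞ e^{-2x²/(TD)} dx`) equals
`T (DT/(DT-4σ²))^{1/2} - T + Tσ/(√(DT)+2σ)` when `T > 4σ²/D`, and is infinite
when `T ≤ 4σ²/D`. -/
theorem bb_reset_gaussian_average (D T σ : ℝ) (hD : 0 < D) (hT : 0 < T) (hσ : 0 < σ) :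
    (4 * σ ^ 2 / D < T →
      ∫ a : ℝ,
          (T * (Real.exp (2 * a ^ 2 / (D * T)) - 1)
            + (2 * |a| * Real.exp (2 * a ^ 2 / (D * T)) / D) *
                ∫ x in Set.Ioi |a|, Real.exp (-(2 * x ^ 2) / (T * D))) *
            (Real.exp (-a ^ 2 / (2 * σ ^ 2)) / (Real.sqrt (2 * Real.pi) * σ))
        = T * (D * T / (D * T - 4 * σ ^ 2)) ^ ((1 : ℝ) / 2) - T
            + T * σ / (Real.sqrt (D * T) + 2 * σ)) ∧
    (T ≤ 4 * σ ^ 2 / D →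
      ∫⁻ a : ℝ,
          ENNReal.ofReal
            ((T * (Real.exp (2 * a ^ 2 / (D * T)) - 1)
              + (2 * |a| * Real.exp (2 * a ^ 2 / (D * T)) / D) *
                  ∫ x in Set.Ioi |a|, Real.exp (-(2 * x ^ 2) / (T * D))) *
              (Real.exp (-a ^ 2 / (2 * σ ^ 2)) / (Real.sqrt (2 * Real.pi) * σ)))
        = ⊤) := by
  have hb : (0:ℝ) < 2 / (T * D) := by positivity
  have hS : (0:ℝ) < Real.sqrt (2 * Real.pi) * σ := by
    have := Real.pi_pos; positivity
  set b : ℝ := 2 / (T * D) with hb_def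
  set S : ℝ := Real.sqrt (2 * Real.pi) * σ with hS_def
  have hKform : ∀ a : ℝ, (∫ x in Set.Ioi |a|, Real.exp (-(2 * x ^ 2) / (T * D))) = Kb b |a| := by
    intro a
    unfold Kb
    refine setIntegral_congr_fun measurableSet_Ioi fun x _ => ?_
    rw [hb_def]
    congr 1
    ring
  clear_value b S
  constructor
  · intro h1
    have hDT : (0:ℝ) < D * T := by positivity
    have hQ : (0:ℝ) < D * T - 4 * σ ^ 2 := by
      rw [div_lt_iff₀ hD] at h1
      nlinarith
    set c : ℝ := 1 / (2 * σ ^ 2) - 2 / (D * T) with hc_def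
    have hc : 0 < c := by
      have hceq : c = (D * T - 4 * σ ^ 2) / (2 * σ ^ 2 * (D * T)) := by
        rw [hc_def]; field_simp; ring
      rw [hceq]; positivity
    have hcb : c + b = 1 / (2 * σ ^ 2) := by
      rw [hc_def, hb_def]; field_simp; ring
    clear_value c
    -- pointwise identity
    have hpt : ∀ a : ℝ,
        (T * (Real.exp (2 * a ^ 2 / (D * T)) - 1)
            + (2 * |a| * Real.exp (2 * a ^ 2 / (D * T)) / D) *
                ∫ x in Set.Ioi |a|, Real.exp (-(2 * x ^ 2) / (T * D))) *
            (Real.exp (-a ^ 2 / (2 * σ ^ 2)) / S)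
        = T / S * Real.exp (-c * a ^ 2) + (-(T / S)) * Real.exp (-(1 / (2 * σ ^ 2)) * a ^ 2)
            + (2 / (D * S)) * (|a| * Real.exp (-c * |a| ^ 2) * Kb b |a|) := by
      intro a
      rw [hKform a]
      have hee : Real.exp (2 * a ^ 2 / (D * T)) * Real.exp (-a ^ 2 / (2 * σ ^ 2))
          = Real.exp (-c * a ^ 2) := by
        rw [← Real.exp_add]
        congr 1
        rw [hc_def]
        field_simp
        ring
      have h2 : Real.exp (-a ^ 2 / (2 * σ ^ 2)) = Real.exp (-(1 / (2 * σ ^ 2)) * a ^ 2) := by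
        congr 1; field_simp
      rw [sq_abs]
      linear_combination (T / S + 2 * |a| * Kb b |a| / (D * S)) * hee - (T / S) * h2
    have habs : Integrable (fun x : ℝ => |x| * Real.exp (-c * x ^ 2)) := by
      have h := (integrable_rpow_mul_exp_neg_mul_sq hc (by norm_num : (-1:ℝ) < 1)).abs
      simpa only [Real.rpow_one, abs_mul, Real.abs_exp] using h
    have hI1 : Integrable (fun a : ℝ => T / S * Real.exp (-c * a ^ 2)) :=
      (integrable_exp_neg_mul_sq hc).const_mul _
    have hI2 : Integrable (fun a : ℝ => (-(T / S)) * Real.exp (-(1 / (2 * σ ^ 2)) * a ^ 2)) :=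
      (integrable_exp_neg_mul_sq (by positivity)).const_mul _
    have hI3' : Integrable (fun a : ℝ => |a| * Real.exp (-c * |a| ^ 2) * Kb b |a|) := by
      refine Integrable.mono' (habs.const_mul (Kb b 0)) ?_ ?_
      · exact ((continuous_abs.mul (by continuity)).mul
          ((Kb_continuous hb).comp continuous_abs)).aestronglyMeasurable
      · refine Filter.Eventually.of_forall fun a => ?_
        have hK0 := Kb_nonneg b |a|
        have hKle := Kb_le hb (abs_nonneg a)
        rw [Real.norm_eq_abs, abs_of_nonneg (by positivity), sq_abs]
        have hye : 0 ≤ |a| * Real.exp (-c * a ^ 2) := by positivity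
        nlinarith [sq_abs a]
    have hI3 : Integrable (fun a : ℝ => (2 / (D * S)) * (|a| * Real.exp (-c * |a| ^ 2) * Kb b |a|)) :=
      hI3'.const_mul _
    have hI12 : Integrable (fun a : ℝ => T / S * Real.exp (-c * a ^ 2)
        + (-(T / S)) * Real.exp (-(1 / (2 * σ ^ 2)) * a ^ 2)) := hI1.add hI2
    rw [integral_congr_ae (Filter.Eventually.of_forall hpt), integral_add hI12 hI3,
      integral_add hI1 hI2, integral_const_mul, integral_const_mul, integral_gaussian,
      integral_gaussian]
    have hJ3 : ∫ a : ℝ, (2 / (D * S)) * (|a| * Real.exp (-c * |a| ^ 2) * Kb b |a|)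
        = 2 * (2 / (D * S) * (Kb b 0 / (2 * c) - (Real.sqrt (Real.pi / (c + b)) / 2) / (2 * c))) := by
      rw [integral_comp_abs (f := fun y => (2 / (D * S)) * (y * Real.exp (-c * y ^ 2) * Kb b y)),
        integral_const_mul, parts hb hc]
    rw [hJ3]
    -- numeric evaluation
    have h2pis : Real.sqrt (2 * Real.pi * σ ^ 2) = S := by
      rw [Real.sqrt_mul (by positivity), Real.sqrt_sq hσ.le, hS_def]
    have hscb : Real.sqrt (Real.pi / (c + b)) = S := by
      rw [hcb, show Real.pi / (1 / (2 * σ ^ 2)) = 2 * Real.pi * σ ^ 2 by field_simp, h2pis]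
    have hs2 : Real.sqrt (Real.pi / (1 / (2 * σ ^ 2))) = S := by
      rw [show Real.pi / (1 / (2 * σ ^ 2)) = 2 * Real.pi * σ ^ 2 by field_simp, h2pis]
    have hcval : c = (D * T - 4 * σ ^ 2) / (2 * σ ^ 2 * (D * T)) := by
      rw [hc_def]; field_simp; ring
    have hsc : Real.sqrt (Real.pi / c) = S * Real.sqrt (D * T / (D * T - 4 * σ ^ 2)) := by
      have hceq : Real.pi / c = (2 * Real.pi * σ ^ 2) * (D * T / (D * T - 4 * σ ^ 2)) := by
        rw [hcval, div_div_eq_mul_div]; ring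
      rw [hceq, Real.sqrt_mul (by positivity), h2pis]
    have hpib : Real.pi / b = (2 * Real.pi) * ((D * T) * (1 / 2) ^ 2) := by
      rw [hb_def]; field_simp
    have hKb0 : Kb b 0 = Real.sqrt (2 * Real.pi) * Real.sqrt (D * T) / 4 := by
      rw [Kb_zero, hpib, Real.sqrt_mul (by positivity : (0:ℝ) ≤ 2 * Real.pi),
        Real.sqrt_mul hDT.le, Real.sqrt_sq (by norm_num : (0:ℝ) ≤ 1 / 2)]
      ring
    rw [hscb, hs2, hsc, hKb0, ← Real.sqrt_eq_rpow]
    have hsqDT : Real.sqrt (D * T) ^ 2 = D * T := Real.sq_sqrt hDT.le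
    have hsDTpos : 0 < Real.sqrt (D * T) := Real.sqrt_pos.mpr hDT
    have hgt : 2 * σ < Real.sqrt (D * T) := by
      have h4 : Real.sqrt (4 * σ ^ 2) < Real.sqrt (D * T) :=
        Real.sqrt_lt_sqrt (by positivity) (by linarith)
      rwa [show (4:ℝ) * σ ^ 2 = (2 * σ) ^ 2 by ring,
        Real.sqrt_sq (by positivity)] at h4
    have hQfact : D * T - 4 * σ ^ 2 = (Real.sqrt (D * T) - 2 * σ) * (Real.sqrt (D * T) + 2 * σ) := by
      linear_combination -hsqDT
    have hsq2pi : (0:ℝ) < Real.sqrt (2 * Real.pi) := Real.sqrt_pos.mpr (by positivity)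
    have hf3 : 2 * (2 / (D * S) * (Real.sqrt (2 * Real.pi) * Real.sqrt (D * T) / 4 / (2 * c)
        - S / 2 / (2 * c))) = T * σ / (Real.sqrt (D * T) + 2 * σ) := by
      have step1 : 2 * (2 / (D * S) * (Real.sqrt (2 * Real.pi) * Real.sqrt (D * T) / 4 / (2 * c)
          - S / 2 / (2 * c))) = (Real.sqrt (D * T) - 2 * σ) / (2 * D * σ * c) := by
        rw [hS_def]
        field_simp
        ring
      rw [step1, hcval, hQfact]
      exact alg2 hσ hD hT (ne_of_gt (by linarith)) (by positivity)
    rw [hf3]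
    have hTS : T / S * S = T := div_mul_cancel₀ T hS.ne'
    linear_combination (Real.sqrt (D * T / (D * T - 4 * σ ^ 2)) - 1) * hTS
  · intro h2
    have hDT4 : D * T ≤ 4 * σ ^ 2 := by
      rw [le_div_iff₀ hD] at h2; linarith
    have hexp_half : Real.exp (-(1:ℝ)/2) < 1 := by
      calc Real.exp (-(1:ℝ)/2) < Real.exp 0 := Real.exp_lt_exp.mpr (by norm_num)
        _ = 1 := Real.exp_zero
    have hε : 0 < T * (1 - Real.exp (-(1:ℝ)/2)) / S := by
      have : 0 < 1 - Real.exp (-(1:ℝ)/2) := by linarith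
      positivity
    set ε : ℝ := T * (1 - Real.exp (-(1:ℝ)/2)) / S with hε_def
    have hlow : ∀ a : ℝ, a ∈ Set.Ici σ → ε ≤
        (T * (Real.exp (2 * a ^ 2 / (D * T)) - 1)
          + (2 * |a| * Real.exp (2 * a ^ 2 / (D * T)) / D) *
              ∫ x in Set.Ioi |a|, Real.exp (-(2 * x ^ 2) / (T * D))) *
          (Real.exp (-a ^ 2 / (2 * σ ^ 2)) / S) := by
      intro a ha
      have haσ : σ ≤ a := ha
      have ha2 : σ ^ 2 ≤ a ^ 2 := by nlinarith
      rw [hKform a]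
      set E : ℝ := Real.exp (2 * a ^ 2 / (D * T)) with hE_def
      set u : ℝ := Real.exp (-a ^ 2 / (2 * σ ^ 2)) with hu_def
      have hu : 0 < u := Real.exp_pos _
      have husmall : u ≤ Real.exp (-(1:ℝ)/2) := by
        rw [hu_def]
        apply Real.exp_le_exp.mpr
        rw [div_le_div_iff₀ (by positivity) (by norm_num)]
        nlinarith
      have he4 : Real.exp (a ^ 2 / (2 * σ ^ 2)) ≤ E := by
        rw [hE_def]
        apply Real.exp_le_exp.mpr
        rw [div_le_div_iff₀ (by positivity) (by positivity)]
        nlinarith [sq_nonneg a]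
      have hprod : Real.exp (a ^ 2 / (2 * σ ^ 2)) * u = 1 := by
        rw [hu_def, ← Real.exp_add, show a ^ 2 / (2 * σ ^ 2) + -a ^ 2 / (2 * σ ^ 2) = 0 by ring,
          Real.exp_zero]
      have hEu : 1 ≤ E * u := by
        calc 1 = Real.exp (a ^ 2 / (2 * σ ^ 2)) * u := hprod.symm
          _ ≤ E * u := mul_le_mul_of_nonneg_right he4 hu.le
      have hB : 0 ≤ (2 * |a| * E / D) * Kb b |a| := by
        have := Kb_nonneg b |a|
        positivity
      have key : T * (1 - Real.exp (-(1:ℝ)/2))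
          ≤ (T * (E - 1) + (2 * |a| * E / D) * Kb b |a|) * u := by
        nlinarith [mul_le_mul_of_nonneg_left hEu hT.le,
          mul_le_mul_of_nonneg_left husmall hT.le, mul_nonneg hB hu.le]
      calc ε ≤ ((T * (E - 1) + (2 * |a| * E / D) * Kb b |a|) * u) / S := by
            rw [hε_def]
            exact (div_le_div_iff_of_pos_right hS).mpr key
        _ = (T * (E - 1) + (2 * |a| * E / D) * Kb b |a|) * (u / S) := by ring
    have hge : ∀ a : ℝ, (Set.Ici σ).indicator (fun _ => ENNReal.ofReal ε) a ≤
        ENNReal.ofReal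
          ((T * (Real.exp (2 * a ^ 2 / (D * T)) - 1)
            + (2 * |a| * Real.exp (2 * a ^ 2 / (D * T)) / D) *
                ∫ x in Set.Ioi |a|, Real.exp (-(2 * x ^ 2) / (T * D))) *
            (Real.exp (-a ^ 2 / (2 * σ ^ 2)) / S)) := by
      intro a
      by_cases ha : a ∈ Set.Ici σ
      · rw [Set.indicator_of_mem ha]
        exact ENNReal.ofReal_le_ofReal (hlow a ha)
      · rw [Set.indicator_of_notMem ha]
        exact zero_le
    have hmono := lintegral_mono (μ := (volume : Measure ℝ)) hge
    rw [lintegral_indicator measurableSet_Ici _, setLIntegral_const, Real.volume_Ici,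
      ENNReal.mul_top (ENNReal.ofReal_pos.mpr hε).ne'] at hmono
    exact top_le_iff.mp hmono
end
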